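/- arXiv:2012.14880 — 7 statements merged into one kernel-verified Lean document; each statement's English description precedes it below -/
import Mathlib

section
/- Let G be a group and H ≤ G a subgroup of index at most n. If H satisfies a group law w_H, then G satisfies the composite law w_H ∘ x^{n!}. -/
/-- If H ≤ G has (finite) index at most n and H satisfies the law w,
then G satisfies the composite law w ∘ x^{n!}. -/
theorem law_finite_index {G : Type*} [Group G] (H : Subgroup G) (n : ℕ)
    (hpos : 0 < H.index) (hle : H.index ≤ n)
    {r : ℕ} (w : FreeGroup (Fin r))
    (hH : ∀ f : Fin r → G, (∀ i, f i ∈ H) → FreeGroup.lift f w = 1) :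
    ∀ f : Fin r → G,
      FreeGroup.lift f (FreeGroup.lift (fun i => FreeGroup.of i ^ (Nat.factorial n)) w) = 1 := by
  classical
  intro f
  have hfin : H.FiniteIndex := ⟨hpos.ne'⟩
  have hfinQ : Finite (G ⧸ H) := Subgroup.finite_quotient_of_finiteIndex
  have : Fintype (G ⧸ H) := Fintype.ofFinite _
  -- the normal core
  set K := H.normalCore with hK
  have hKnormal : K.Normal := Subgroup.normalCore_normal H
  -- K.index divides (H.index)!
  have hdvd : K.index ∣ Nat.factorial H.index := by
    rw [hK, Subgroup.normalCore_eq_ker, Subgroup.index_ker]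
    have := Subgroup.card_subgroup_dvd_card (MulAction.toPermHom G (G ⧸ H)).range
    rwa [Nat.card_eq_fintype_card (α := Equiv.Perm (G ⧸ H)), Fintype.card_perm,
      ← Nat.card_eq_fintype_card, ← Subgroup.index] at this
  have hdvd' : K.index ∣ Nat.factorial n :=
    hdvd.trans (Nat.factorial_dvd_factorial hle)
  have hmem : ∀ g : G, g ^ Nat.factorial n ∈ H := by
    intro g
    obtain ⟨c, hc⟩ := hdvd'
    have : g ^ Nat.factorial n ∈ K := by
      rw [hc, pow_mul]
      exact Subgroup.pow_mem K (K.pow_index_mem g) c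
    exact H.normalCore_le this
  -- compose the lifts
  have hcomp : FreeGroup.lift f (FreeGroup.lift
      (fun i => FreeGroup.of i ^ (Nat.factorial n)) w)
      = FreeGroup.lift (fun i => f i ^ Nat.factorial n) w := by
    rw [← MonoidHom.comp_apply]
    congr 1
    apply FreeGroup.ext_hom
    intro i
    simp
  rw [hcomp]
  exact hH _ fun i => hmem (f i)
end

section
/- Let H be a torsion-free hyperbolic group, φ an automorphism of H, and a ∈ H a nontrivial element. If there exist nonzero integers k and l such that φ(a^k) = a^l, then φ(a) = a or φ(a) = a^{-1}. -/
/-- A monoid is torsion-free if every non-identity element has infinite order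
(the definition of `Monoid.IsTorsionFree` in the older Mathlib, since removed). -/
def Monoid.IsTorsionFree (G : Type*) [Monoid G] : Prop :=
  ∀ g : G, g ≠ 1 → ¬IsOfFinOrder g

lemma mem_centralizer_singleton_iff' {H : Type*} [Group H] {g x : H} :
    x ∈ Subgroup.centralizer {g} ↔ Commute g x := by
  rw [Subgroup.mem_centralizer_iff]
  constructor
  · intro hx
    exact hx g rfl
  · rintro hc y rfl
    exact hc

/-- Let H be a torsion-free hyperbolic group (encoded via the
characteristic property that the centralizer of every nontrivial element is a
maximal cyclic subgroup), φ an automorphism, a ≠ 1.  If φ(a^k) = a^l for nonzero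
integers k, l then φ(a) = a or φ(a) = a⁻¹. -/
theorem aut_fixes_root {H : Type*} [Group H]
    (htf : Monoid.IsTorsionFree H)
    (hmc : ∀ g : H, g ≠ 1 →
      (∃ b : H, Subgroup.centralizer {g} = Subgroup.zpowers b) ∧
      ∀ z : H, Subgroup.centralizer {g} ≤ Subgroup.zpowers z →
        Subgroup.centralizer {g} = Subgroup.zpowers z)
    (φ : H ≃* H) (a : H) (ha : a ≠ 1)
    (k l : ℤ) (hk : k ≠ 0) (hl : l ≠ 0)
    (h : φ (a ^ k) = a ^ l) : φ a = a ∨ φ a = a⁻¹ := by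
  have hinj : Function.Injective fun n : ℤ => a ^ n :=
    injective_zpow_iff_not_isOfFinOrder.mpr (htf a ha)
  have hal : a ^ l ≠ 1 := fun hh => hl (hinj (by simpa using hh))
  obtain ⟨b, hb⟩ := (hmc a ha).1
  have hmax := (hmc a ha).2
  have hamem : a ∈ Subgroup.zpowers b := by
    rw [← hb]; exact mem_centralizer_singleton_iff'.mpr (Commute.refl a)
  obtain ⟨m, hm⟩ := Subgroup.mem_zpowers_iff.mp hamem
  have hbne : b ≠ 1 := by
    rintro rfl
    simp only [one_zpow] at hm
    exact ha hm.symm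
  have hbinj : Function.Injective fun n : ℤ => b ^ n :=
    injective_zpow_iff_not_isOfFinOrder.mpr (htf b hbne)
  -- C(a) = C(a^l)
  have hle : Subgroup.centralizer {a} ≤ Subgroup.centralizer {a ^ l} := fun x hx =>
    mem_centralizer_singleton_iff'.mpr
      ((mem_centralizer_singleton_iff'.mp hx).zpow_left l)
  have hCal : Subgroup.centralizer {a} = Subgroup.centralizer {a ^ l} := by
    obtain ⟨c, hc⟩ := (hmc (a ^ l) hal).1
    rw [hmax c (hc ▸ hle), ← hc]
  -- φ a commutes with a^l, hence φ a ∈ zpowers b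
  have hφa_mem : φ a ∈ Subgroup.zpowers b := by
    rw [← hb, hCal]
    refine mem_centralizer_singleton_iff'.mpr ?_
    rw [← h, map_zpow]
    exact (Commute.refl (φ a)).zpow_left k
  obtain ⟨n, hn⟩ := Subgroup.mem_zpowers_iff.mp hφa_mem
  have hφane : φ a ≠ 1 := fun hh => ha (φ.injective (by simpa using hh))
  -- C(a) = C(φ a)
  have hle2 : Subgroup.centralizer {a} ≤ Subgroup.centralizer {φ a} := by
    rw [hb]
    rintro x ⟨j, rfl⟩
    exact mem_centralizer_singleton_iff'.mpr
      (hn ▸ Commute.zpow_zpow_self b n j)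
  have hCφa : Subgroup.centralizer {a} = Subgroup.centralizer {φ a} := by
    obtain ⟨c, hc⟩ := (hmc (φ a) hφane).1
    rw [hmax c (hc ▸ hle2), ← hc]
  -- b commutes with a and with φ a
  have hba : Commute a b := by
    rw [← hm]; exact ((Commute.refl b).zpow_left m)
  have hbφa : Commute (φ a) b := by
    rw [← hn]; exact ((Commute.refl b).zpow_left n)
  -- φ b ∈ zpowers b
  have hφb : φ b ∈ Subgroup.zpowers b := by
    rw [← hb, hCφa]
    refine mem_centralizer_singleton_iff'.mpr ?_
    have : Commute (φ a) (φ b) := by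
      unfold Commute SemiconjBy
      rw [← map_mul, ← map_mul, hba]
    exact this
  obtain ⟨e, he⟩ := Subgroup.mem_zpowers_iff.mp hφb
  -- φ⁻¹ b ∈ zpowers b
  have hφib : φ.symm b ∈ Subgroup.zpowers b := by
    rw [← hb]
    refine mem_centralizer_singleton_iff'.mpr ?_
    have : Commute (φ.symm (φ a)) (φ.symm b) := by
      unfold Commute SemiconjBy
      rw [← map_mul, ← map_mul, hbφa]
    simpa using this
  obtain ⟨f, hf⟩ := Subgroup.mem_zpowers_iff.mp hφib
  have hef : b ^ (f * e) = b ^ (1 : ℤ) := by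
    rw [zpow_mul, hf, zpow_one]
    calc (φ.symm b) ^ e = φ.symm (b ^ e) := by rw [map_zpow]
    _ = φ.symm (φ b) := by rw [he]
    _ = b := φ.symm_apply_apply b
  have hef1 : f * e = 1 := hbinj hef
  have : e = 1 ∨ e = -1 := Int.eq_one_or_neg_one_of_mul_eq_one (mul_comm f e ▸ hef1)
  have hφa_eq : φ a = a ^ e := by
    rw [← hm, map_zpow, ← he, ← zpow_mul, mul_comm, zpow_mul]
  rcases this with rfl | rfl
  · left; rw [hφa_eq, zpow_one]
  · right; rw [hφa_eq, zpow_neg_one]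
end

section
/- Let H be a commutative transitive group and ψ an automorphism of H. If g ∈ H is such that the subgroup generated by {ψ^k(g) : k ∈ ℤ} is nonabelian, then the subgroup generated by g and ψ(g) is nonabelian. -/
lemma closure_comm_aux {H : Type*} [Group H] {S : Set H}
    (h : ∀ a ∈ S, ∀ b ∈ S, Commute a b) :
    ∀ x ∈ Subgroup.closure S, ∀ y ∈ Subgroup.closure S, Commute x y := by
  intro x hx y hy
  induction hx, hy using Subgroup.closure_induction₂ with
  | mem a b ha hb => exact h a ha b hb
  | one_left x hx => exact Commute.one_left x
  | one_right x hx => exact Commute.one_right x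
  | mul_left x y z _ _ _ h1 h2 => exact h1.mul_left h2
  | mul_right y z x _ _ _ h1 h2 => exact h1.mul_right h2
  | inv_left x y _ _ h1 => exact h1.inv_left
  | inv_right x y _ _ h1 => exact h1.inv_right

/-- In a commutative transitive group, if the subgroup generated by
all ψ-iterates of g is nonabelian, then ⟨g, ψ(g)⟩ is already nonabelian. -/
theorem ct_iterates {H : Type*} [Group H]
    (hct : ∀ a b c : H, a ≠ 1 → b ≠ 1 → c ≠ 1 →
      Commute a b → Commute b c → Commute a c)
    (ψ : MulAut H) (g : H)
    (hna : ¬ ∀ x ∈ Subgroup.closure (Set.range fun k : ℤ => (ψ ^ k) g),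
        ∀ y ∈ Subgroup.closure (Set.range fun k : ℤ => (ψ ^ k) g), Commute x y) :
    ¬ ∀ x ∈ Subgroup.closure {g, ψ g},
        ∀ y ∈ Subgroup.closure {g, ψ g}, Commute x y := by
  intro h
  apply hna
  apply closure_comm_aux
  rintro _ ⟨j, rfl⟩ _ ⟨k, rfl⟩
  by_cases hg : g = 1
  · simp [hg]
  -- all iterates nontrivial
  have hne : ∀ m : ℤ, (ψ ^ m) g ≠ 1 := by
    intro m hm
    exact hg ((ψ ^ m).injective (by simpa using hm))
  -- g commutes with ψ g
  have hc : Commute g (ψ g) :=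
    h g (Subgroup.subset_closure (Set.mem_insert _ _))
      (ψ g) (Subgroup.subset_closure (Set.mem_insert_of_mem _ rfl))
  -- consecutive iterates commute
  have hcons : ∀ m : ℤ, Commute ((ψ ^ m) g) ((ψ ^ (m + 1)) g) := by
    intro m
    have := hc.map (ψ ^ m : MulAut H)
    have h1 : (ψ ^ (m + 1)) g = (ψ ^ m) (ψ g) := by
      rw [zpow_add_one]; rfl
    rwa [h1]
  -- iterates at any distance commute
  have key : ∀ n : ℕ, ∀ m : ℤ, Commute ((ψ ^ m) g) ((ψ ^ (m + n)) g) := by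
    intro n
    induction n with
    | zero => intro m; simpa using Commute.refl _
    | succ n ih =>
      intro m
      have h1 := ih m
      have h2 := hcons (m + n)
      have h3 := hct _ _ _ (hne m) (hne (m + n)) (hne (m + n + 1)) h1 h2
      have : (m : ℤ) + (n + 1 : ℕ) = m + n + 1 := by push_cast; ring
      rwa [this]
  rcases le_or_gt j k with hjk | hjk
  · obtain ⟨n, rfl⟩ := Int.le.dest hjk
    exact key n j
  · obtain ⟨n, rfl⟩ := Int.le.dest hjk.le
    exact (key n k).symm
end

section
/- Let F be a 2-free word-hyperbolic group and A an abelian group, and let E be a group fitting in a short exact sequence 1 → F → E → A → 1. If T ⊆ E is a finite generating set of a subgroup ⟨T⟩ of exponential growth, then there exist words of T-length at most 6 that freely generate a nonabelian free subgroup of ⟨T⟩. -/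
/-- `g` can be written as a word of length at most `N` in `S ∪ S⁻¹`. -/
def ShortWord {G : Type*} [Group G] (S : Set G) (N : ℕ) (g : G) : Prop :=
  ∃ l : List G, (∀ x ∈ l, x ∈ S ∨ x⁻¹ ∈ S) ∧ l.length ≤ N ∧ l.prod = g

/-- The ball of radius `n` in the word metric of `S`. -/
def wordBall {G : Type*} [Group G] (S : Set G) (n : ℕ) : Set G :=
  {g | ShortWord S n g}

/-- The exponential growth rate of a generating set, as the infimum (= limit, by
submultiplicativity) of `log |B_n| / n`. -/
noncomputable def growthRate {G : Type*} [Group G] (S : Set G) : ℝ :=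
  ⨅ n : ℕ+, Real.log (Nat.card ↥(wordBall S (n : ℕ))) / ((n : ℕ) : ℝ)

namespace TFBA
open Finset

variable {G : Type*} [Group G]

/-- moving a power of `h₀` rightwards past `g`, with controlled exponent -/
def MoveR (h₀ : G) (Q : ℕ) (g : G) : Prop :=
  ∀ c : ℤ, ∃ c', h₀ ^ c * g = g * h₀ ^ c' ∧ |c'| ≤ max |c| (Q : ℤ)

variable {h₀ : G} {Q : ℕ}

lemma moveR_one : MoveR h₀ Q 1 := fun c => ⟨c, by simp, le_max_left _ _⟩

lemma moveR_mul {g g' : G} (hg : MoveR h₀ Q g) (hg' : MoveR h₀ Q g') :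
    MoveR h₀ Q (g * g') := by
  intro c
  obtain ⟨c1, h1, b1⟩ := hg c
  obtain ⟨c2, h2, b2⟩ := hg' c1
  refine ⟨c2, ?_, ?_⟩
  · rw [← mul_assoc, h1, mul_assoc, h2, mul_assoc]
  · refine b2.trans ?_
    have := le_max_left |c| (Q : ℤ)
    simp only [max_le_iff, le_max_iff] at *
    omega

lemma moveR_pow {g : G} (hg : MoveR h₀ Q g) : ∀ n : ℕ, MoveR h₀ Q (g ^ n)
  | 0 => by simpa using moveR_one
  | (n+1) => by
      rw [pow_succ]
      exact moveR_mul (moveR_pow hg n) hg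

lemma moveR_zpow {g : G} (hg : MoveR h₀ Q g) (hg' : MoveR h₀ Q g⁻¹) (p : ℤ) :
    MoveR h₀ Q (g ^ p) := by
  rcases le_or_gt 0 p with hp | hp
  · lift p to ℕ using hp
    rw [zpow_natCast]; exact moveR_pow hg p
  · have h1 : (0:ℤ) ≤ -p := by omega
    have h2 : g ^ p = (g⁻¹) ^ (-p).toNat := by
      rw [← zpow_natCast, Int.toNat_of_nonneg h1, inv_zpow, ← zpow_neg, neg_neg]
    rw [h2]; exact moveR_pow hg' _

/-- swap relation with bounded correction -/
def Swp (h₀ : G) (B : ℤ) (u v : G) : Prop :=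
  ∃ c : ℤ, |c| ≤ B ∧ u * v = v * u * h₀ ^ c

variable {B : ℤ}

lemma swp_symm {u v : G} (h : Swp h₀ B u v) : Swp h₀ B v u := by
  obtain ⟨c, hc, he⟩ := h
  refine ⟨-c, by simpa using hc, ?_⟩
  rw [he]
  group

lemma swp_inv_left (hQB : (Q : ℤ) ≤ B) {u v : G} (h : Swp h₀ B u v)
    (hu : MoveR h₀ Q u⁻¹) : Swp h₀ B u⁻¹ v := by
  obtain ⟨c, hc, he⟩ := h
  obtain ⟨c', hc', hb⟩ := hu (-c)
  rw [abs_neg] at hb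
  refine ⟨c', hb.trans (max_le hc hQB), ?_⟩
  have he' : v * u = u * v * h₀ ^ (-c) := by rw [he]; group
  calc u⁻¹ * v = u⁻¹ * (v * u) * u⁻¹ := by group
  _ = u⁻¹ * (u * v * h₀ ^ (-c)) * u⁻¹ := by rw [he']
  _ = v * (h₀ ^ (-c) * u⁻¹) := by group
  _ = v * (u⁻¹ * h₀ ^ c') := by rw [hc']
  _ = v * u⁻¹ * h₀ ^ c' := by rw [mul_assoc]

lemma swp_inv_right (hQB : (Q : ℤ) ≤ B) {u v : G} (h : Swp h₀ B u v)
    (hv : MoveR h₀ Q v⁻¹) : Swp h₀ B u v⁻¹ :=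
  swp_symm (swp_inv_left hQB (swp_symm h) hv)

lemma swp_pow (hQB : (Q : ℤ) ≤ B) {u v : G} (huv : Swp h₀ B u v)
    (hv : MoveR h₀ Q v) :
    ∀ n : ℕ, ∃ d : ℤ, u * v ^ n = v ^ n * u * h₀ ^ d ∧ |d| ≤ (Q : ℤ) + n * B := by
  have hQ0 : (0:ℤ) ≤ (Q:ℤ) := Int.natCast_nonneg Q
  have hB0 : (0:ℤ) ≤ B := hQ0.trans hQB
  intro n
  induction n with
  | zero => exact ⟨0, by simp, by simpa using hQ0⟩
  | succ n ih =>
    obtain ⟨d, hd, hb⟩ := ih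
    obtain ⟨c, hc, he⟩ := huv
    obtain ⟨d', hd', hb'⟩ := hv d
    have hnB : (0:ℤ) ≤ (n:ℤ) * B := mul_nonneg (Int.natCast_nonneg n) hB0
    refine ⟨c + d', ?_, ?_⟩
    · calc u * v ^ (n+1) = (u * v ^ n) * v := by rw [pow_succ, mul_assoc]
      _ = v ^ n * u * (h₀ ^ d * v) := by rw [hd]; group
      _ = v ^ n * (u * v) * h₀ ^ d' := by rw [hd']; group
      _ = v ^ n * (v * u * h₀ ^ c) * h₀ ^ c * h₀ ^ (d' - c) := by rw [he]; group
      _ = v ^ (n+1) * u * h₀ ^ (c + d') := by rw [pow_succ']; group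
    · have h1 : |c + d'| ≤ |c| + |d'| := abs_add_le _ _
      have h2 : |d'| ≤ (Q:ℤ) + n * B := hb'.trans (max_le hb (by linarith))
      have : ((n:ℤ) + 1) * B = n * B + B := by ring
      push_cast
      linarith

lemma swp_zpow (hQB : (Q : ℤ) ≤ B) {u v : G} (huv : Swp h₀ B u v)
    (huv' : Swp h₀ B u v⁻¹) (hv : MoveR h₀ Q v) (hv' : MoveR h₀ Q v⁻¹) :
    ∀ p : ℤ, ∃ d : ℤ, u * v ^ p = v ^ p * u * h₀ ^ d ∧ |d| ≤ (Q : ℤ) + |p| * B := by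
  intro p
  rcases le_or_gt 0 p with hp | hp
  · lift p to ℕ using hp
    obtain ⟨d, hd, hb⟩ := swp_pow hQB huv hv p
    refine ⟨d, by rw [zpow_natCast]; exact hd, ?_⟩
    rwa [abs_of_nonneg (Int.natCast_nonneg p : (0:ℤ) ≤ (p:ℕ))]
  · have h1 : (0:ℤ) ≤ -p := by omega
    obtain ⟨d, hd, hb⟩ := swp_pow hQB huv' hv' (-p).toNat
    have h2 : v ^ p = (v⁻¹) ^ ((-p).toNat) := by
      rw [← zpow_natCast, Int.toNat_of_nonneg h1, inv_zpow, ← zpow_neg, neg_neg]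
    refine ⟨d, by rw [h2]; exact hd, ?_⟩
    refine hb.trans ?_
    have h3 : ((-p).toNat : ℤ) = |p| := by rw [Int.toNat_of_nonneg h1, abs_of_neg hp]
    rw [h3]


/-- ordered product `t (m-1) ^ e (m-1) * ⋯ * t 0 ^ e 0` -/
def Rw (t : ℕ → G) : ℕ → (ℕ → ℤ) → G
  | 0, _ => 1
  | (m+1), e => t m ^ (e m) * Rw t m e

variable {t : ℕ → G}

lemma Rw_congr {m : ℕ} {e e' : ℕ → ℤ} (h : ∀ i < m, e i = e' i) :
    Rw t m e = Rw t m e' := by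
  induction m with
  | zero => rfl
  | succ m ih =>
    rw [Rw, Rw, h m (by omega), ih fun i hi => h i (by omega)]

lemma Rw_zero {m : ℕ} {e : ℕ → ℤ} (h : ∀ i < m, e i = 0) : Rw t m e = 1 := by
  induction m with
  | zero => rfl
  | succ m ih =>
    rw [Rw, h m (by omega), zpow_zero, one_mul, ih fun i hi => h i (by omega)]

lemma moveR_Rw (HW : ∀ i, MoveR h₀ Q (t i) ∧ MoveR h₀ Q (t i)⁻¹)
    (m : ℕ) (e : ℕ → ℤ) : MoveR h₀ Q (Rw t m e) := by
  induction m with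
  | zero => exact moveR_one
  | succ m ih =>
    exact moveR_mul (moveR_zpow (HW m).1 (HW m).2 (e m)) ih

lemma insert_letter (hQB : (Q : ℤ) ≤ B)
    (HW : ∀ i, MoveR h₀ Q (t i) ∧ MoveR h₀ Q (t i)⁻¹)
    (HS : ∀ i j, Swp h₀ B (t i) (t j)) :
    ∀ (m : ℕ) (j : ℕ), j < m → ∀ (σ : ℤ), (σ = 1 ∨ σ = -1) → ∀ (e : ℕ → ℤ),
    ∃ d : ℤ, t j ^ σ * Rw t m e
        = Rw t m (Function.update e j (e j + σ)) * h₀ ^ d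
      ∧ |d| ≤ ((m:ℤ) + ∑ i ∈ range m, |e i|) * (B + (Q:ℤ)) + (Q:ℤ) := by
  have hQ0 : (0:ℤ) ≤ (Q:ℤ) := Int.natCast_nonneg Q
  have hB0 : (0:ℤ) ≤ B := hQ0.trans hQB
  intro m
  induction m with
  | zero => omega
  | succ m ih =>
    intro j hj σ hσ e
    have hsum0 : (0:ℤ) ≤ ∑ i ∈ range m, |e i| := sum_nonneg fun i _ => abs_nonneg _
    rcases Nat.lt_succ_iff_lt_or_eq.mp hj with hj' | heq
    · -- j < m
      -- u = t j ^ σ is a letter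
      have hu : t j ^ σ = t j ∨ t j ^ σ = (t j)⁻¹ := by
        rcases hσ with rfl | rfl
        · left; exact zpow_one _
        · right; exact zpow_neg_one _
      have huv : Swp h₀ B (t j ^ σ) (t m) := by
        rcases hu with h | h <;> rw [h]
        · exact HS j m
        · exact swp_inv_left hQB (HS j m) (HW j).2
      have huv' : Swp h₀ B (t j ^ σ) (t m)⁻¹ :=
        swp_inv_right hQB huv (HW m).2
      obtain ⟨d₁, hd₁, hb₁⟩ := swp_zpow hQB huv huv' (HW m).1 (HW m).2 (e m)
      obtain ⟨d₁', hd₁', hb₁'⟩ := moveR_Rw HW m e d₁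
      obtain ⟨d₂, hd₂, hb₂⟩ := ih j hj' σ hσ e
      have hem : Function.update e j (e j + σ) m = e m :=
        Function.update_of_ne (by omega) _ _
      refine ⟨d₂ + d₁', ?_, ?_⟩
      · calc t j ^ σ * Rw t (m+1) e
            = (t j ^ σ * t m ^ (e m)) * Rw t m e := by rw [Rw]; group
        _ = t m ^ (e m) * (t j ^ σ * (h₀ ^ d₁ * Rw t m e)) := by rw [hd₁]; group
        _ = t m ^ (e m) * (t j ^ σ * Rw t m e) * h₀ ^ d₁' := by rw [hd₁']; group
        _ = t m ^ (e m) * Rw t m (Function.update e j (e j + σ)) * h₀ ^ (d₂ + d₁') := by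
              rw [hd₂, zpow_add]; group
        _ = Rw t (m+1) (Function.update e j (e j + σ)) * h₀ ^ (d₂ + d₁') := by
              rw [Rw, hem]
      · have h1 : |d₂ + d₁'| ≤ |d₂| + |d₁'| := abs_add_le _ _
        have h2 : |d₁'| ≤ max |d₁| (Q:ℤ) := hb₁'
        have h3 : max |d₁| (Q:ℤ) ≤ (Q:ℤ) + |e m| * B := by
          have : (0:ℤ) ≤ |e m| * B := mul_nonneg (abs_nonneg _) hB0
          exact max_le (hb₁.trans le_rfl) (by linarith)
        have h4 : ∑ i ∈ range (m+1), |e i| = (∑ i ∈ range m, |e i|) + |e m| :=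
          sum_range_succ _ _
        rw [h4]
        have hem0 : (0:ℤ) ≤ |e m| := abs_nonneg _
        push_cast
        nlinarith [mul_nonneg hem0 hQ0, mul_nonneg hem0 hB0]
    · -- j = m
      subst heq
      refine ⟨0, ?_, ?_⟩
      · have h1 : Rw t j (Function.update e j (e j + σ)) = Rw t j e :=
          Rw_congr fun i hi => Function.update_of_ne (by omega) _ _
        rw [Rw, Rw, h1, Function.update_self, zpow_zero, mul_one, ← mul_assoc,
          ← zpow_add]
        ring_nf
      · have h5 : (0:ℤ) ≤ ∑ i ∈ range (j+1), |e i| := sum_nonneg fun i _ => abs_nonneg _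
        have h6 : (0:ℤ) ≤ ((j:ℤ) + 1 + (∑ i ∈ range (j+1), |e i|)) * (B + Q) := by positivity
        simpa using by push_cast; linarith



lemma collect (hQB : (Q : ℤ) ≤ B)
    (HW : ∀ i, MoveR h₀ Q (t i) ∧ MoveR h₀ Q (t i)⁻¹)
    (HS : ∀ i j, Swp h₀ B (t i) (t j)) (k : ℕ) :
    ∀ l : List G, (∀ x ∈ l, ∃ j, j < k ∧ (x = t j ∨ x = (t j)⁻¹)) →
    ∃ (e : ℕ → ℤ) (s : ℤ),
      (∀ i, k ≤ i → e i = 0) ∧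
      (∑ i ∈ range k, |e i|) ≤ (l.length : ℤ) ∧
      |s| ≤ (l.length : ℤ) * (((k:ℤ) + l.length) * (B + (Q:ℤ)) + (Q:ℤ)) ∧
      l.prod = Rw t k e * h₀ ^ s := by
  have hQ0 : (0:ℤ) ≤ (Q:ℤ) := Int.natCast_nonneg Q
  have hB0 : (0:ℤ) ≤ B := hQ0.trans hQB
  intro l
  induction l with
  | nil =>
    intro _
    refine ⟨fun _ => 0, 0, fun _ _ => rfl, by simp, by simp, ?_⟩
    rw [Rw_zero fun _ _ => rfl]; simp
  | cons x l ihl =>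
    intro hx
    obtain ⟨e, s, he0, hesum, hsb, hprod⟩ := ihl fun y hy => hx y (List.mem_cons_of_mem _ hy)
    obtain ⟨j, hj, hxj⟩ := hx x List.mem_cons_self
    obtain ⟨σ, hσ, hxσ⟩ : ∃ σ : ℤ, (σ = 1 ∨ σ = -1) ∧ x = t j ^ σ := by
      rcases hxj with h | h
      exacts [⟨1, Or.inl rfl, by simp [h]⟩, ⟨-1, Or.inr rfl, by simp [h]⟩]
    obtain ⟨d, hd, hdb⟩ := insert_letter hQB HW HS k j hj σ hσ e
    set e' := Function.update e j (e j + σ) with he'def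
    refine ⟨e', d + s, ?_, ?_, ?_, ?_⟩
    · intro i hi
      have : i ≠ j := by omega
      rw [he'def, Function.update_of_ne this, he0 i hi]
    · have hjm : j ∈ range k := mem_range.mpr hj
      have hsplit : ∑ i ∈ range k, |e' i| = (∑ i ∈ (range k).erase j, |e' i|) + |e' j| :=
        (Finset.sum_erase_add _ _ hjm).symm
      have hsplit2 : ∑ i ∈ range k, |e i| = (∑ i ∈ (range k).erase j, |e i|) + |e j| :=
        (Finset.sum_erase_add _ _ hjm).symm
      have hcong : ∑ i ∈ (range k).erase j, |e' i| = ∑ i ∈ (range k).erase j, |e i| :=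
        Finset.sum_congr rfl fun i hi => by
          rw [he'def, Function.update_of_ne (Finset.ne_of_mem_erase hi)]
      have h7 : |e' j| ≤ |e j| + 1 := by
        rw [he'def, Function.update_self]
        calc |e j + σ| ≤ |e j| + |σ| := abs_add_le _ _
        _ ≤ |e j| + 1 := by rcases hσ with rfl | rfl <;> simp
      rw [hsplit2] at hesum
      simp only [List.length_cons]
      rw [hsplit, hcong]
      push_cast
      linarith
    · have hL0 : (0:ℤ) ≤ (l.length : ℤ) := Int.natCast_nonneg _
      have hK0 : (0:ℤ) ≤ (k : ℤ) := Int.natCast_nonneg _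
      have hdb' : |d| ≤ ((k:ℤ) + l.length) * (B + (Q:ℤ)) + (Q:ℤ) := by
        refine hdb.trans ?_
        have : ∑ i ∈ range k, |e i| ≤ (l.length : ℤ) := hesum
        nlinarith
      have habs : |d + s| ≤ |d| + |s| := abs_add_le _ _
      simp only [List.length_cons]
      push_cast
      nlinarith [abs_nonneg d, abs_nonneg s]
    · rw [List.prod_cons, hprod, hxσ, ← mul_assoc, hd, zpow_add]
      group



lemma ball_card_le (T : Finset G) (h₀ : G) (Q E₀ : ℕ)
    (HW' : ∀ x ∈ T, MoveR h₀ Q x ∧ MoveR h₀ Q x⁻¹)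
    (HS' : ∀ x ∈ T, ∀ y ∈ T, ∃ c : ℤ, |c| ≤ (E₀:ℤ) ∧ x * y = y * x * h₀ ^ c)
    (n : ℕ) :
    Nat.card (wordBall (T : Set G) n)
      ≤ (2*n+1)^T.card * (2*(n * ((T.card + n) * (max E₀ Q + Q) + Q)) + 1) := by
  classical
  set k := T.card with hk
  set t : ℕ → G := fun i => if h : i < k then ((T.equivFin.symm ⟨i, h⟩ : T) : G) else 1
    with htdef
  have ht_mem : ∀ i, i < k → t i ∈ T := by
    intro i hi
    simp only [htdef, dif_pos hi]
    exact Finset.coe_mem _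
  have ht_surj : ∀ x ∈ T, ∃ j, j < k ∧ t j = x := by
    intro x hx
    refine ⟨(T.equivFin ⟨x, hx⟩ : Fin k), (T.equivFin ⟨x, hx⟩).2, ?_⟩
    simp only [htdef, dif_pos (T.equivFin ⟨x, hx⟩).2, Fin.eta, Equiv.symm_apply_apply]
    rw [dif_pos (Fin.is_lt _)]
  set B : ℤ := ((max E₀ Q : ℕ) : ℤ) with hBdef
  have hQB : (Q:ℤ) ≤ B := by rw [hBdef]; exact_mod_cast le_max_right E₀ Q
  have hB0 : (0:ℤ) ≤ B := (Int.natCast_nonneg Q).trans hQB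
  have HW : ∀ i, MoveR h₀ Q (t i) ∧ MoveR h₀ Q (t i)⁻¹ := by
    intro i
    by_cases hi : i < k
    · exact HW' _ (ht_mem i hi)
    · simp only [htdef, dif_neg hi, inv_one]
      exact ⟨moveR_one, moveR_one⟩
  have HS : ∀ i j, Swp h₀ B (t i) (t j) := by
    intro i j
    by_cases hi : i < k
    · by_cases hj : j < k
      · obtain ⟨c, hc, he⟩ := HS' _ (ht_mem i hi) _ (ht_mem j hj)
        exact ⟨c, hc.trans (by rw [hBdef]; exact_mod_cast le_max_left E₀ Q), he⟩
      · refine ⟨0, by simpa using hB0, ?_⟩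
        simp [htdef, dif_neg hj]
    · refine ⟨0, by simpa using hB0, ?_⟩
      simp [htdef, dif_neg hi]
  set Sb : ℕ := n * ((k + n) * (max E₀ Q + Q) + Q) with hSbdef
  set f : (Fin k → ℤ) × ℤ → G :=
    fun p => Rw t k (fun i => if h : i < k then p.1 ⟨i, h⟩ else 0) * h₀ ^ p.2 with hfdef
  set Fs : Finset ((Fin k → ℤ) × ℤ) :=
    (Fintype.piFinset fun _ => Finset.Icc (-(n:ℤ)) (n:ℤ)) ×ˢ
      Finset.Icc (-(Sb:ℤ)) (Sb:ℤ) with hFsdef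
  have hsub : wordBall (T : Set G) n ⊆ f '' (Fs : Set ((Fin k → ℤ) × ℤ)) := by
    rintro g ⟨l, hlet, hlen, hprod⟩
    have hlets : ∀ x ∈ l, ∃ j, j < k ∧ (x = t j ∨ x = (t j)⁻¹) := by
      intro x hxl
      rcases hlet x hxl with hmem | hmem
      · obtain ⟨j, hj, hje⟩ := ht_surj x hmem
        exact ⟨j, hj, Or.inl hje.symm⟩
      · obtain ⟨j, hj, hje⟩ := ht_surj x⁻¹ hmem
        exact ⟨j, hj, Or.inr (by rw [hje, inv_inv])⟩
    obtain ⟨e, s, he0, hesum, hsb, hps⟩ := collect hQB HW HS k l hlets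
    have hlen' : (l.length : ℤ) ≤ (n : ℤ) := by exact_mod_cast hlen
    have habs : ∀ i, i < k → |e i| ≤ (n:ℤ) := by
      intro i hi
      refine le_trans ?_ (hesum.trans hlen')
      exact Finset.single_le_sum (f := fun i => |e i|) (fun i _ => abs_nonneg _)
        (Finset.mem_range.mpr hi)
    have hsn : |s| ≤ (Sb : ℤ) := by
      refine hsb.trans ?_
      have hL0 : (0:ℤ) ≤ (l.length : ℤ) := Int.natCast_nonneg _
      have hK0 : (0:ℤ) ≤ (k : ℤ) := Int.natCast_nonneg _
      have hQ0 : (0:ℤ) ≤ (Q : ℤ) := Int.natCast_nonneg _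
      have hn0 : (0:ℤ) ≤ (n : ℤ) := Int.natCast_nonneg _
      have : (Sb : ℤ) = (n:ℤ) * (((k:ℤ) + (n:ℤ)) * (B + (Q:ℤ)) + (Q:ℤ)) := by
        rw [hSbdef, hBdef]; push_cast; ring
      rw [this]
      have h1 : ((k:ℤ) + l.length) * (B + (Q:ℤ)) ≤ ((k:ℤ) + n) * (B + (Q:ℤ)) :=
        mul_le_mul_of_nonneg_right (by linarith) (by linarith)
      have h2 : (0:ℤ) ≤ ((k:ℤ) + l.length) * (B + (Q:ℤ)) + (Q:ℤ) := by positivity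
      exact mul_le_mul hlen' (by linarith) h2 hn0
    refine ⟨(fun i => e i, s), ?_, ?_⟩
    · rw [Finset.mem_coe, hFsdef, Finset.mem_product]
      constructor
      · rw [Fintype.mem_piFinset]
        intro i
        rw [Finset.mem_Icc]
        have := habs i i.2
        rw [abs_le] at this
        exact this
      · rw [Finset.mem_Icc]
        rw [abs_le] at hsn
        exact hsn
    · rw [hfdef]
      simp only
      rw [show (Rw t k fun i => if h : i < k then e i else 0) = Rw t k e from
        Rw_congr fun i hi => by rw [dif_pos hi], ← hps, hprod]
  have hfin : (Fs : Set ((Fin k → ℤ) × ℤ)).Finite := Fs.finite_toSet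
  calc Nat.card (wordBall (T : Set G) n)
      ≤ Nat.card (f '' (Fs : Set ((Fin k → ℤ) × ℤ))) :=
        Nat.card_mono (hfin.image f) hsub
    _ ≤ Nat.card (Fs : Set ((Fin k → ℤ) × ℤ)) := Nat.card_image_le hfin
    _ = Fs.card := by rw [Nat.card_coe_set_eq, Set.ncard_coe_finset]
    _ = (2*n+1)^k * (2*Sb+1) := by
        have hIcc : ∀ m : ℕ, (Finset.Icc (-(m:ℤ)) (m:ℤ)).card = 2*m+1 := by
          intro m; rw [Int.card_Icc]; omega
        rw [hFsdef, Finset.card_product, Fintype.card_piFinset]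
        simp only [hIcc]
        rw [Finset.prod_const, Finset.card_univ, Fintype.card_fin]





open Filter in
lemma no_exp_growth (T : Finset G) (h₀ : G) (Q E₀ : ℕ)
    (HW' : ∀ x ∈ T, MoveR h₀ Q x ∧ MoveR h₀ Q x⁻¹)
    (HS' : ∀ x ∈ T, ∀ y ∈ T, ∃ c : ℤ, |c| ≤ (E₀:ℤ) ∧ x * y = y * x * h₀ ^ c) :
    ¬ 0 < growthRate (T : Set G) := by
  intro hexp
  set k := T.card with hk
  set M : ℕ := max E₀ Q + Q with hM
  set C : ℕ := 2^k * (2*(k+1)*M + 2*Q + 1) with hC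
  have hC0 : 0 < C := by positivity
  have hbnd : ∀ n : ℕ, Nat.card (wordBall (T:Set G) n) ≤ C * (n+1)^(k+2) := by
    intro n
    refine (ball_card_le T h₀ Q E₀ HW' HS' n).trans ?_
    have h1 : (2*n+1)^k ≤ 2^k * (n+1)^k := by
      calc (2*n+1)^k ≤ (2*(n+1))^k := Nat.pow_le_pow_left (by omega) k
      _ = 2^k * (n+1)^k := mul_pow _ _ _
    have h2 : 2*(n*((k+n)*M + Q))+1 ≤ (2*(k+1)*M + 2*Q + 1) * (n+1)^2 := by
      zify
      nlinarith [Int.natCast_nonneg n, Int.natCast_nonneg k, Int.natCast_nonneg M,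
        Int.natCast_nonneg Q, mul_nonneg (Int.natCast_nonneg n) (Int.natCast_nonneg M),
        mul_nonneg (Int.natCast_nonneg k) (Int.natCast_nonneg M),
        mul_nonneg (mul_nonneg (Int.natCast_nonneg n) (Int.natCast_nonneg n)) (Int.natCast_nonneg M),
        mul_nonneg (mul_nonneg (Int.natCast_nonneg k) (Int.natCast_nonneg n)) (Int.natCast_nonneg M),
        mul_nonneg (Int.natCast_nonneg n) (Int.natCast_nonneg Q)]
    calc (2*n+1)^k * (2*(n*((k+n)*M + Q))+1)
        ≤ (2^k * (n+1)^k) * ((2*(k+1)*M + 2*Q + 1) * (n+1)^2) := Nat.mul_le_mul h1 h2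
    _ = C * (n+1)^(k+2) := by rw [hC]; ring
  have hone : ∀ n : ℕ, (1:ℝ) ≤ (C:ℝ) * ((n:ℝ)+1)^(k+2) := by
    intro n
    have h1 : (1:ℝ) ≤ (C:ℝ) := by exact_mod_cast hC0
    have h2 : (1:ℝ) ≤ ((n:ℝ)+1)^(k+2) := one_le_pow₀ (by linarith [Nat.cast_nonneg (α := ℝ) n])
    nlinarith
  have hlb : BddBelow (Set.range fun m : ℕ+ =>
      Real.log (Nat.card (wordBall (T:Set G) (m:ℕ))) / ((m:ℕ):ℝ)) := by
    refine ⟨0, ?_⟩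
    rintro x ⟨m, rfl⟩
    refine div_nonneg ?_ (by positivity)
    rcases Nat.eq_zero_or_pos (Nat.card (wordBall (T:Set G) (m:ℕ))) with h | h
    · rw [h]; simp
    · exact Real.log_natCast_nonneg _
  have key : ∀ m : ℕ+, growthRate (T:Set G)
      ≤ Real.log ((C:ℝ) * (((m:ℕ):ℝ)+1)^(k+2)) / (((m:ℕ)):ℝ) := by
    intro m
    refine le_trans (ciInf_le hlb m) ?_
    have hpos : (0:ℝ) < ((m:ℕ):ℝ) := by exact_mod_cast m.2
    have hnum : Real.log (Nat.card (wordBall (T:Set G) (m:ℕ)))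
        ≤ Real.log ((C:ℝ) * (((m:ℕ):ℝ)+1)^(k+2)) := by
      rcases Nat.eq_zero_or_pos (Nat.card (wordBall (T:Set G) (m:ℕ))) with h | h
      · rw [h]
        simpa using Real.log_nonneg (hone m)
      · refine Real.log_le_log (by exact_mod_cast h) ?_
        calc ((Nat.card (wordBall (T:Set G) (m:ℕ)) : ℝ))
            ≤ ((C * ((m:ℕ)+1)^(k+2) : ℕ) : ℝ) := by exact_mod_cast hbnd (m:ℕ)
        _ = (C:ℝ) * (((m:ℕ):ℝ)+1)^(k+2) := by push_cast; ring
    exact div_le_div_of_nonneg_right hnum hpos.le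
  have htend : Tendsto (fun m : ℕ => Real.log ((C:ℝ) * ((m:ℝ)+1)^(k+2)) / (m:ℝ))
      atTop (nhds 0) := by
    have heq : (fun m : ℕ => Real.log ((C:ℝ) * ((m:ℝ)+1)^(k+2)) / (m:ℝ))
        = fun m : ℕ => Real.log C / (m:ℝ)
            + ((k:ℝ)+2) * (Real.log ((m:ℝ)+1) / ((m:ℝ)+1)) * (((m:ℝ)+1) / (m:ℝ)) := by
      funext m
      have hm1 : (0:ℝ) < (m:ℝ)+1 := by positivity
      rcases Nat.eq_zero_or_pos m with rfl | hm
      · simp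
      have hm0 : (0:ℝ) < (m:ℝ) := by exact_mod_cast hm
      rw [Real.log_mul (by positivity) (by positivity), Real.log_pow]
      field_simp
      push_cast; ring
    rw [heq]
    have t1 : Tendsto (fun m : ℕ => Real.log C / (m:ℝ)) atTop (nhds 0) :=
      tendsto_const_div_atTop_nhds_zero_nat _
    have tn : Tendsto (fun m : ℕ => (m:ℝ)+1) atTop atTop :=
      tendsto_atTop_add_const_right _ _ tendsto_natCast_atTop_atTop
    have t2 : Tendsto (fun m : ℕ => Real.log ((m:ℝ)+1) / ((m:ℝ)+1)) atTop (nhds 0) :=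
      (Real.isLittleO_log_id_atTop.tendsto_div_nhds_zero).comp tn
    have t3 : Tendsto (fun m : ℕ => ((m:ℝ)+1) / (m:ℝ)) atTop (nhds 1) := by
      have : (fun m : ℕ => ((m:ℝ)+1) / (m:ℝ)) =ᶠ[atTop] fun m : ℕ => 1 + 1/(m:ℝ) := by
        filter_upwards [eventually_gt_atTop 0] with m hm
        have hm0 : (0:ℝ) < (m:ℝ) := by exact_mod_cast hm
        field_simp
      rw [tendsto_congr' this]
      have := tendsto_const_div_atTop_nhds_zero_nat (1:ℝ)
      simpa using tendsto_const_nhds.add this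
    have := t1.add (((t2.const_mul ((k:ℝ)+2)).mul t3))
    simpa using this
  obtain ⟨m, hm1, hm2⟩ :=
    ((htend.eventually_lt_const hexp).and (eventually_ge_atTop 1)).exists
  have hkey := key ⟨m, hm2⟩
  exact absurd hkey (not_le.mpr hm1)

end TFBA

/-- Let F be a 2-free word-hyperbolic group (2-freeness: every pair
is a free basis or lies in a cyclic subgroup; hyperbolicity encoded via the
property that centralizers of nontrivial elements are maximal cyclic), A abelian,
and 1 → F → E → A → 1 exact.  If the subgroup generated by a finite set T ⊆ E has
exponential growth, then some pair of words of T-length at most 6 freely generates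
a nonabelian free subgroup. -/
theorem two_free_by_abelian {F E A : Type*} [Group F] [Group E] [CommGroup A]
    (h2free : ∀ a b : F,
      Function.Injective ⇑(FreeGroup.lift ![a, b] : FreeGroup (Fin 2) →* F) ∨
      ∃ c : F, a ∈ Subgroup.zpowers c ∧ b ∈ Subgroup.zpowers c)
    (hhyp : ∀ g : F, g ≠ 1 →
      (∃ b : F, Subgroup.centralizer {g} = Subgroup.zpowers b) ∧
      ∀ z : F, Subgroup.centralizer {g} ≤ Subgroup.zpowers z →
        Subgroup.centralizer {g} = Subgroup.zpowers z)
    (ι : F →* E) (hι : Function.Injective ι)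
    (φ : E →* A) (hφ : Function.Surjective φ) (hexact : ι.range = φ.ker)
    (T : Finset E) (hexp : 0 < growthRate (T : Set E)) :
    ∃ a b : E, ShortWord (T : Set E) 6 a ∧ ShortWord (T : Set E) 6 b ∧
      Function.Injective ⇑(FreeGroup.lift ![a, b] : FreeGroup (Fin 2) →* E) := by
  classical
  by_cases hfree : ∃ a b : E, ShortWord (T : Set E) 6 a ∧ ShortWord (T : Set E) 6 b ∧
      Function.Injective ⇑(FreeGroup.lift ![a, b] : FreeGroup (Fin 2) →* E)
  · exact hfree
  exfalso
  push_neg at hfree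
  by_cases hcomm : ∀ x ∈ T, ∀ y ∈ T, x * y = y * x
  · refine TFBA.no_exp_growth T (1 : E) 0 0 ?_ ?_ hexp
    · intro x _
      constructor <;> exact fun c => ⟨c, by simp, le_max_left _ _⟩
    · intro x hx y hy
      exact ⟨0, by simp, by simp [hcomm x hx y hy]⟩
  push_neg at hcomm
  obtain ⟨t₀, ht₀, t₁, ht₁, hne⟩ := hcomm
  -- the basic nontrivial commutator
  set a : E := t₀ * t₁ * t₀⁻¹ * t₁⁻¹ with hadef
  have hker_ι : ∀ y : F, φ (ι y) = 1 := by
    intro y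
    have : ι y ∈ φ.ker := hexact ▸ ⟨y, rfl⟩
    exact this
  have hrange : ∀ g : E, φ g = 1 → ∃ y : F, ι y = g := by
    intro g hg
    have : g ∈ ι.range := by rw [hexact]; exact hg
    exact this
  have ha1 : a ≠ 1 := by
    intro h
    apply hne
    open scoped commutatorElement in have : ⁅t₀, t₁⁆ = 1 := h
    exact (commutatorElement_eq_one_iff_commute.mp this).eq
  have haker : φ a = 1 := by
    open scoped commutatorElement in have : φ a = ⁅φ t₀, φ t₁⁆ := map_commutatorElement φ t₀ t₁
    rw [this]
    exact commutatorElement_eq_one_iff_commute.mpr (Commute.all _ _)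
  obtain ⟨a₀, ha₀⟩ := hrange a haker
  have ha₀1 : a₀ ≠ 1 := fun h => ha1 (by rw [← ha₀, h, map_one])
  obtain ⟨⟨z, hzc⟩, hmax⟩ := hhyp a₀ ha₀1
  set h₀ : E := ι z with hh₀def
  -- short word for a
  have hTin : ∀ x ∈ T, x ∈ (T : Set E) ∨ x⁻¹ ∈ (T : Set E) := fun x hx => Or.inl hx
  have hTinv : ∀ x ∈ T, x⁻¹ ∈ (T : Set E) ∨ (x⁻¹)⁻¹ ∈ (T : Set E) :=
    fun x hx => Or.inr (by simpa using hx)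
  have hswa : ShortWord (T : Set E) 6 a := by
    refine ⟨[t₀, t₁, t₀⁻¹, t₁⁻¹], ?_, by norm_num, ?_⟩
    · intro x hx
      simp only [List.mem_cons, List.not_mem_nil, or_false] at hx
      rcases hx with rfl | rfl | rfl | rfl
      · exact hTin _ ht₀
      · exact hTin _ ht₁
      · exact hTinv _ ht₀
      · exact hTinv _ ht₁
    · simp [hadef, mul_assoc]
  -- key lemma : short words in the kernel are powers of h₀
  have hinZ : ∀ g : E, ShortWord (T : Set E) 6 g → φ g = 1 → ∃ m : ℤ, g = h₀ ^ m := by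
    intro g hsw hg
    by_cases hg1 : g = 1
    · exact ⟨0, by simp [hg1]⟩
    obtain ⟨d, hd⟩ := hrange g hg
    have hd1 : d ≠ 1 := fun h => hg1 (by rw [← hd, h, map_one])
    rcases h2free a₀ d with hinj | ⟨c, hac, hdc⟩
    · exfalso
      apply hfree a g hswa hsw
      have hcomp : (FreeGroup.lift ![a, g] : FreeGroup (Fin 2) →* E)
          = ι.comp (FreeGroup.lift ![a₀, d]) := by
        refine (FreeGroup.ext_hom _ _ ?_).symm
        intro i
        fin_cases i <;> simp [ha₀, hd]
      rw [hcomp]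
      exact hι.comp hinj
    · obtain ⟨p, hp⟩ := Subgroup.mem_zpowers_iff.mp hac
      have hcz : c ∈ Subgroup.centralizer {a₀} := by
        rw [Subgroup.mem_centralizer_iff]
        intro y hy
        rw [Set.mem_singleton_iff] at hy
        subst hy
        rw [← hp]
        exact ((Commute.refl c).zpow_left p).eq
      rw [hzc] at hcz
      obtain ⟨q, hq⟩ := Subgroup.mem_zpowers_iff.mp hcz
      obtain ⟨r, hr⟩ := Subgroup.mem_zpowers_iff.mp hdc
      refine ⟨q * r, ?_⟩
      rw [← hd, ← hr, ← hq, ← zpow_mul, map_zpow]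
  -- a₀ is a power of z
  obtain ⟨p₀, hp₀⟩ : ∃ p : ℤ, z ^ p = a₀ := by
    have : a₀ ∈ Subgroup.centralizer {a₀} := by
      rw [Subgroup.mem_centralizer_iff]
      intro y hy
      rw [Set.mem_singleton_iff] at hy
      subst hy
      rfl
    rw [hzc] at this
    exact Subgroup.mem_zpowers_iff.mp this
  -- conjugation stability of powers of h₀ under elements of T
  have hstab : ∀ x ∈ T,
      (∃ α : ℤ, x * h₀ * x⁻¹ = h₀ ^ α) ∧ (∃ β : ℤ, x⁻¹ * h₀ * x = h₀ ^ β) := by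
    intro x hx
    set b : E := x * a * x⁻¹ with hbdef
    have hswb : ShortWord (T : Set E) 6 b := by
      refine ⟨[x, t₀, t₁, t₀⁻¹, t₁⁻¹, x⁻¹], ?_, by norm_num, ?_⟩
      · intro y hy
        simp only [List.mem_cons, List.not_mem_nil, or_false] at hy
        rcases hy with rfl | rfl | rfl | rfl | rfl | rfl
        · exact hTin _ hx
        · exact hTin _ ht₀
        · exact hTin _ ht₁
        · exact hTinv _ ht₀
        · exact hTinv _ ht₁
        · exact hTinv _ hx
      · simp [hbdef, hadef, mul_assoc]
    have hbker : φ b = 1 := by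
      rw [hbdef, map_mul, map_mul, haker, map_inv]
      simp
    obtain ⟨mb, hmb⟩ := hinZ b hswb hbker
    set b₀ : F := z ^ mb with hb₀def
    have hb : ι b₀ = b := by rw [hb₀def, map_zpow, ← hh₀def, ← hmb]
    have hb1 : b₀ ≠ 1 := by
      intro h
      apply ha1
      have hb1' : b = 1 := by rw [← hb, h, map_one]
      have : a = x⁻¹ * b * x := by rw [hbdef]; group
      rw [this, hb1']
      group
    obtain ⟨⟨w, hwc⟩, _⟩ := hhyp b₀ hb1
    have hzpows_le : Subgroup.zpowers z ≤ Subgroup.centralizer {b₀} := by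
      intro u hu
      obtain ⟨su, hsu⟩ := Subgroup.mem_zpowers_iff.mp hu
      rw [Subgroup.mem_centralizer_iff]
      intro y hy
      rw [Set.mem_singleton_iff] at hy
      subst hy
      rw [← hsu, hb₀def]
      exact (zpow_mul_comm z mb su)
    have hcb : Subgroup.centralizer {b₀} = Subgroup.zpowers z := by
      have h2 : Subgroup.centralizer {a₀} ≤ Subgroup.zpowers w := by
        rw [hzc]
        exact hzpows_le.trans (le_of_eq hwc)
      have h3 := hmax w h2
      rw [hwc, ← h3, hzc]
    constructor
    · -- x * h₀ * x⁻¹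
      set v : E := x * h₀ * x⁻¹ with hvdef
      have hvker : φ v = 1 := by
        rw [hvdef, map_mul, map_mul, hh₀def, hker_ι, map_inv]
        simp
      obtain ⟨y, hy⟩ := hrange v hvker
      have hvb : v * b = b * v := by
        have h1 : h₀ * a = a * h₀ := by
          rw [← ha₀, hh₀def, ← map_mul, ← map_mul, ← hp₀]
          congr 1
          exact ((Commute.refl z).zpow_right p₀).eq
        calc v * b = x * (h₀ * a) * x⁻¹ := by rw [hvdef, hbdef]; group
        _ = x * (a * h₀) * x⁻¹ := by rw [h1]
        _ = b * v := by rw [hvdef, hbdef]; group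
      have hyb : y ∈ Subgroup.centralizer {b₀} := by
        rw [Subgroup.mem_centralizer_iff]
        intro u hu
        rw [Set.mem_singleton_iff] at hu
        subst hu
        apply hι
        rw [map_mul, map_mul, hb, hy]
        exact (hvb).symm
      rw [hcb] at hyb
      obtain ⟨α, hα⟩ := Subgroup.mem_zpowers_iff.mp hyb
      exact ⟨α, by rw [← hy, ← hα, map_zpow]⟩
    · -- x⁻¹ * h₀ * x
      set v : E := x⁻¹ * h₀ * x with hvdef
      have hvker : φ v = 1 := by
        rw [hvdef, map_mul, map_mul, hh₀def, hker_ι, map_inv]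
        simp
      obtain ⟨y, hy⟩ := hrange v hvker
      have hva : v * a = a * v := by
        have h1 : h₀ * b = b * h₀ := by
          rw [← hb, hh₀def, ← map_mul, ← map_mul, hb₀def]
          congr 1
          exact ((Commute.refl z).zpow_right mb).eq
        have h2 : a = x⁻¹ * b * x := by rw [hbdef]; group
        calc v * a = x⁻¹ * (h₀ * b) * x := by rw [hvdef, h2]; group
        _ = x⁻¹ * (b * h₀) * x := by rw [h1]
        _ = a * v := by rw [hvdef, h2]; group
      have hya : y ∈ Subgroup.centralizer {a₀} := by
        rw [Subgroup.mem_centralizer_iff]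
        intro u hu
        rw [Set.mem_singleton_iff] at hu
        subst hu
        apply hι
        rw [map_mul, map_mul, ha₀, hy]
        exact (hva).symm
      rw [hzc] at hya
      obtain ⟨β, hβ⟩ := Subgroup.mem_zpowers_iff.mp hya
      exact ⟨β, by rw [← hy, ← hβ, map_zpow]⟩
  -- build the MoveR hypotheses with Q = orderOf h₀
  set Q : ℕ := orderOf h₀ with hQdef
  have hmove : ∀ x : E, (∃ α : ℤ, x * h₀ * x⁻¹ = h₀ ^ α) →
      (∃ β : ℤ, x⁻¹ * h₀ * x = h₀ ^ β) → TFBA.MoveR h₀ Q x := by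
    rintro x ⟨α, hα⟩ ⟨β, hβ⟩
    have hrel : h₀ ^ (α * β) = h₀ := by
      calc h₀ ^ (α * β) = (h₀ ^ α) ^ β := by rw [zpow_mul]
      _ = (x * h₀ * x⁻¹) ^ β := by rw [hα]
      _ = x * h₀ ^ β * x⁻¹ := conj_zpow
      _ = x * (x⁻¹ * h₀ * x) * x⁻¹ := by rw [← hβ]
      _ = h₀ := by group
    have hconj : ∀ c : ℤ, h₀ ^ c * x = x * h₀ ^ (β * c) := by
      intro c
      have h1 : x⁻¹ * h₀ ^ c * x = (x⁻¹ * h₀ * x) ^ c := by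
        rw [show x⁻¹ * h₀ * x = x⁻¹ * h₀ * (x⁻¹)⁻¹ by rw [inv_inv],
          conj_zpow, inv_inv]
      have h2 : x⁻¹ * h₀ ^ c * x = h₀ ^ (β * c) := by
        rw [h1, hβ, ← zpow_mul]
      calc h₀ ^ c * x = x * (x⁻¹ * h₀ ^ c * x) := by group
      _ = x * h₀ ^ (β * c) := by rw [h2]
    intro c
    by_cases hfin : Q = 0
    · -- infinite order
      have hβ1 : β = 1 ∨ β = -1 := by
        have h1 : h₀ ^ (α * β - 1) = 1 := by
          rw [zpow_sub, hrel, zpow_one, mul_inv_cancel]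
        have h2 : α * β - 1 = 0 := by
          by_contra h
          have : IsOfFinOrder h₀ := isOfFinOrder_iff_zpow_eq_one.mpr ⟨_, h, h1⟩
          rw [hQdef] at hfin
          exact (orderOf_eq_zero_iff.mp hfin) this
        have h3 : β * α = 1 := by linarith [h2]
        rcases Int.isUnit_iff.mp (IsUnit.of_mul_eq_one α h3) with h | h
        · exact Or.inl h
        · exact Or.inr h
      refine ⟨β * c, hconj c, ?_⟩
      have : |β * c| = |c| := by
        rw [abs_mul]
        rcases hβ1 with rfl | rfl <;> simp
      rw [this]
      exact le_max_left _ _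
    · -- finite order
      have hQpos : 0 < (Q:ℤ) := by exact_mod_cast Nat.pos_of_ne_zero hfin
      refine ⟨(β * c) % (Q:ℤ), ?_, ?_⟩
      · rw [hconj c]
        congr 1
        rw [hQdef]
        exact (zpow_mod_orderOf h₀ (β * c)).symm
      · have h1 : 0 ≤ (β * c) % (Q:ℤ) := Int.emod_nonneg _ (by exact_mod_cast hfin)
        have h2 : (β * c) % (Q:ℤ) < (Q:ℤ) := Int.emod_lt_of_pos _ hQpos
        rw [abs_of_nonneg h1]
        exact le_max_of_le_right (by linarith)
  have HW' : ∀ x ∈ T, TFBA.MoveR h₀ Q x ∧ TFBA.MoveR h₀ Q x⁻¹ := by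
    intro x hx
    obtain ⟨hα, hβ⟩ := hstab x hx
    refine ⟨hmove x hα hβ, hmove x⁻¹ ?_ ?_⟩
    · obtain ⟨β, hb⟩ := hβ
      exact ⟨β, by rw [inv_inv]; exact hb⟩
    · obtain ⟨α, ha⟩ := hα
      exact ⟨α, by rw [inv_inv]; exact ha⟩
  -- commutator exponents
  have hcom : ∀ x ∈ T, ∀ y ∈ T, ∃ c : ℤ, x * y = y * x * h₀ ^ c := by
    intro x hx y hy
    have hsw : ShortWord (T : Set E) 6 (x⁻¹ * y⁻¹ * x * y) := by
      refine ⟨[x⁻¹, y⁻¹, x, y], ?_, by norm_num, ?_⟩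
      · intro u hu
        simp only [List.mem_cons, List.not_mem_nil, or_false] at hu
        rcases hu with rfl | rfl | rfl | rfl
        · exact hTinv _ hx
        · exact hTinv _ hy
        · exact hTin _ hx
        · exact hTin _ hy
      · simp [mul_assoc]
    have hkg : φ (x⁻¹ * y⁻¹ * x * y) = 1 := by
      open scoped commutatorElement in
      have h1 : x⁻¹ * y⁻¹ * x * y = ⁅x⁻¹, y⁻¹⁆ := by
        rw [commutatorElement_def, inv_inv, inv_inv]
      rw [h1, map_commutatorElement]
      exact commutatorElement_eq_one_iff_commute.mpr (Commute.all _ _)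
    obtain ⟨c, hc⟩ := hinZ _ hsw hkg
    refine ⟨c, ?_⟩
    rw [← hc]
    group
  have hBpair : ∀ p : E × E, ∃ c : ℤ,
      (p.1 ∈ T → p.2 ∈ T → p.1 * p.2 = p.2 * p.1 * h₀ ^ c) := by
    intro p
    by_cases h : p.1 ∈ T ∧ p.2 ∈ T
    · obtain ⟨c, hc⟩ := hcom _ h.1 _ h.2
      exact ⟨c, fun _ _ => hc⟩
    · exact ⟨0, fun h1 h2 => absurd ⟨h1, h2⟩ h⟩
  choose cf hcf using hBpair
  set E₀ : ℕ := (T ×ˢ T).sup fun p => (cf p).natAbs with hE₀def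
  have HS' : ∀ x ∈ T, ∀ y ∈ T, ∃ c : ℤ, |c| ≤ (E₀:ℤ) ∧ x * y = y * x * h₀ ^ c := by
    intro x hx y hy
    refine ⟨cf (x, y), ?_, hcf (x, y) hx hy⟩
    have h1 : (cf (x, y)).natAbs ≤ E₀ := by
      rw [hE₀def]
      exact Finset.le_sup (f := fun p => (cf p).natAbs)
        (Finset.mem_product.mpr ⟨hx, hy⟩)
    calc |cf (x, y)| = ((cf (x, y)).natAbs : ℤ) := Int.abs_eq_natAbs _
    _ ≤ (E₀ : ℤ) := by exact_mod_cast h1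
  exact TFBA.no_exp_growth T h₀ Q E₀ HW' HS' hexp
end

section
/- Let G be a cyclic-by-abelian group, i.e., G has a normal cyclic subgroup C with G/C abelian. Then G does not have exponential growth (indeed, G is virtually nilpotent). -/
namespace CBA

variable {G : Type*} [Group G]

lemma one_mem_wordBall (S : Set G) (n : ℕ) : (1 : G) ∈ wordBall S n :=
  ⟨[], by simp, by simp, by simp⟩

lemma wordBall_finite (S : Finset G) (n : ℕ) : (wordBall (S : Set G) n).Finite := by
  induction n with
  | zero =>
    refine Set.Finite.subset (Set.finite_singleton 1) ?_
    rintro g ⟨l, -, hlen, hprod⟩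
    interval_cases h : l.length
    · rw [List.length_eq_zero_iff] at h; simp [← hprod, h]
  | succ n ih =>
    have hsub : wordBall (S : Set G) (n+1) ⊆
        wordBall (S : Set G) n ∪ ⋃ x ∈ ((S : Set G) ∪ (S : Set G)⁻¹),
          (x * ·) '' wordBall (S : Set G) n := by
      rintro g ⟨l, hmem, hlen, hprod⟩
      match l with
      | [] => exact Or.inl ⟨[], by simp, by simp, hprod⟩
      | x :: l' =>
        right
        refine Set.mem_biUnion (show x ∈ ((S : Set G) ∪ (S : Set G)⁻¹) from ?_) ?_
        · rcases hmem x (by simp) with h | h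
          · exact Or.inl h
          · exact Or.inr (Set.mem_inv.mpr h)
        · exact ⟨l'.prod, ⟨l', fun y hy => hmem y (by simp [hy]),
            by simpa using Nat.lt_succ_iff.mp (Nat.lt_of_lt_of_le (Nat.lt_succ_of_le le_rfl) hlen) , rfl⟩, by simp [← hprod]⟩
    refine Set.Finite.subset (ih.union ?_) hsub
    exact Set.Finite.biUnion (S.finite_toSet.union S.finite_toSet.inv) fun x _ => ih.image _

/-- product of powers prescribed by a list of pairs -/
def wpow (P : List (G × ℕ)) : G := (P.map fun p => p.1 ^ p.2).prod

@[simp] lemma wpow_nil : wpow ([] : List (G × ℕ)) = 1 := rfl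

@[simp] lemma wpow_cons (u : G) (a : ℕ) (P : List (G × ℕ)) :
    wpow ((u, a) :: P) = u ^ a * wpow P := by simp [wpow]

lemma wpow_zip_zero : ∀ L : List G, wpow (L.zip (List.replicate L.length 0)) = 1
  | [] => rfl
  | u :: L => by simp [List.replicate_succ, wpow_zip_zero L]

section NormalForm

variable (T : Finset G) (Sm : ℕ → G → Prop) (M0 : ℕ)
variable (h1 : Sm 0 1)
variable (hmul : ∀ B1 B2 c d, Sm B1 c → Sm B2 d → Sm (B1 + B2) (c * d))
variable (hconj : ∀ (x : G) (B c), Sm B c → Sm B (x * c * x⁻¹))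
variable (hmono : ∀ B1 B2 c, B1 ≤ B2 → Sm B1 c → Sm B2 c)
variable (hκ : ∀ x ∈ T, ∀ y ∈ T, Sm M0 (y⁻¹ * x⁻¹ * y * x))

include h1 hmul hconj hmono hκ

/-- push one letter through a power -/
lemma pushPow : ∀ (a : ℕ), ∀ x ∈ T, ∀ u ∈ T,
    ∃ c, Sm (M0 * a) c ∧ x * u ^ a = u ^ a * x * c := by
  intro a
  induction a with
  | zero => intro x _ u _; exact ⟨1, by simpa using h1, by simp⟩
  | succ a ih =>
    intro x hx u hu
    obtain ⟨c, hc, hcomm⟩ := ih x hx u hu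
    refine ⟨(x⁻¹ * u⁻¹ * x * u) * (u⁻¹ * c * u), ?_, ?_⟩
    · have := hmul _ _ _ _ (hκ u hu x hx) (hconj u⁻¹ _ _ hc)
      simpa using hmono _ _ _ (by ring_nf; omega) this
    · have hxu : x * u = u * x * (x⁻¹ * u⁻¹ * x * u) := by group
      calc x * u ^ (a+1) = (x * u ^ a) * u := by rw [pow_succ]; group
        _ = u ^ a * x * c * u := by rw [hcomm]
        _ = u ^ a * (x * u) * (u⁻¹ * c * u) := by group
        _ = u ^ a * (u * x * (x⁻¹ * u⁻¹ * x * u)) * (u⁻¹ * c * u) := by rw [← hxu]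
        _ = u ^ (a+1) * x * ((x⁻¹ * u⁻¹ * x * u) * (u⁻¹ * c * u)) := by
            rw [pow_succ]; group

/-- insert one letter into a normal form -/
lemma insertLetter : ∀ (L : List G), (∀ u ∈ L, u ∈ T) → ∀ (A : List ℕ),
    A.length = L.length → ∀ x ∈ L,
    ∃ (A' : List ℕ) (c : G), A'.length = L.length ∧ A'.sum = A.sum + 1 ∧
      Sm (M0 * A.sum) c ∧ x * wpow (L.zip A) = wpow (L.zip A') * c := by
  intro L
  induction L with
  | nil => intro _ _ _ x hx; exact absurd hx List.not_mem_nil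
  | cons u L ih =>
    intro hLT A hlen x hx
    match A with
    | a :: A =>
    simp only [List.length_cons, Nat.succ_inj] at hlen
    have huT : u ∈ T := hLT u (by simp)
    by_cases hxu : x = u
    · subst hxu
      refine ⟨(a+1) :: A, 1, by simp [hlen], by simp [List.sum_cons]; omega,
        hmono _ _ _ (Nat.zero_le _) h1, ?_⟩
      simp only [List.zip_cons_cons, wpow_cons, mul_one]
      rw [← mul_assoc, ← pow_succ']
    · have hxL : x ∈ L := by rcases List.mem_cons.mp hx with h | h; exact absurd h hxu; exact h
      have hxT : x ∈ T := hLT x hx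
      obtain ⟨c₁, hc₁, hcomm₁⟩ := pushPow T Sm M0 h1 hmul hconj hmono hκ a x hxT u huT
      obtain ⟨A', c₂, hlen', hsum', hc₂, hcomm₂⟩ :=
        ih (fun v hv => hLT v (by simp [hv])) A hlen x hxL
      set W := wpow (L.zip A) with hW
      refine ⟨a :: A', c₂ * (W⁻¹ * c₁ * W), by simp [hlen'], by simp [List.sum_cons]; omega, ?_, ?_⟩
      · have := hmul _ _ _ _ hc₂ (hconj W⁻¹ _ _ hc₁)
        simp only [inv_inv] at this
        refine hmono _ _ _ ?_ this
        simp [List.sum_cons, Nat.mul_add, Nat.add_comm]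
      · simp only [List.zip_cons_cons, wpow_cons]
        calc x * (u ^ a * W) = (x * u ^ a) * W := by group
          _ = u ^ a * x * c₁ * W := by rw [hcomm₁]
          _ = u ^ a * (x * W) * (W⁻¹ * c₁ * W) := by group
          _ = u ^ a * (wpow (L.zip A') * c₂) * (W⁻¹ * c₁ * W) := by rw [hcomm₂]
          _ = u ^ a * wpow (L.zip A') * (c₂ * (W⁻¹ * c₁ * W)) := by group

/-- normal form for words -/
lemma normalForm (L : List G) (hLT : ∀ u ∈ L, u ∈ T) :
    ∀ l : List G, (∀ x ∈ l, x ∈ L) →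
    ∃ (A : List ℕ) (c : G), A.length = L.length ∧ A.sum ≤ l.length ∧
      Sm (M0 * l.length * l.length) c ∧ l.prod = wpow (L.zip A) * c := by
  intro l
  induction l with
  | nil =>
    intro _
    refine ⟨List.replicate L.length 0, 1, by simp, by simp, by simpa using h1, ?_⟩
    simp [wpow_zip_zero]
  | cons x l ih =>
    intro hl
    obtain ⟨A, c, hlen, hsum, hc, hprod⟩ := ih fun y hy => hl y (by simp [hy])
    obtain ⟨A', c', hlen', hsum', hc', hcomm⟩ :=
      insertLetter T Sm M0 h1 hmul hconj hmono hκ L hLT A hlen x (hl x (by simp))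
    refine ⟨A', c' * c, hlen', by simp only [List.length_cons]; omega, ?_, ?_⟩
    · have := hmul _ _ _ _ (hmono _ (M0 * l.length) _ (Nat.mul_le_mul_left _ hsum) hc') hc
      refine hmono _ _ _ ?_ this
      simp only [List.length_cons]
      nlinarith
    · calc (x :: l).prod = x * l.prod := by simp
        _ = x * (wpow (L.zip A) * c) := by rw [hprod]
        _ = (x * wpow (L.zip A)) * c := by group
        _ = wpow (L.zip A') * c' * c := by rw [hcomm]
        _ = wpow (L.zip A') * (c' * c) := by group

end NormalForm

section Counting

variable (S T : Finset G) (Sm : ℕ → G → Prop) (M0 : ℕ)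
variable (h1 : Sm 0 1)
variable (hmul : ∀ B1 B2 c d, Sm B1 c → Sm B2 d → Sm (B1 + B2) (c * d))
variable (hconj : ∀ (x : G) (B c), Sm B c → Sm B (x * c * x⁻¹))
variable (hmono : ∀ B1 B2 c, B1 ≤ B2 → Sm B1 c → Sm B2 c)
variable (hκ : ∀ x ∈ T, ∀ y ∈ T, Sm M0 (y⁻¹ * x⁻¹ * y * x))
variable (hST : ∀ x : G, (x ∈ S ∨ x⁻¹ ∈ S) → x ∈ T)

include h1 hmul hconj hmono hκ hST

lemma card_wordBall_le (n : ℕ) (D : Finset G) (hD : ∀ c, Sm (M0 * n * n) c → c ∈ D) :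
    Nat.card (wordBall (S : Set G) n) ≤ (n + 1) ^ T.card * D.card := by
  classical
  set L := T.toList with hL
  have hLT : ∀ u ∈ L, u ∈ T := fun u hu => Finset.mem_toList.mp hu
  set f : ((Fin L.length → Fin (n + 1)) × {c : G // c ∈ D}) → G :=
    fun p => wpow (L.zip (List.ofFn fun i => ((p.1 i : ℕ)))) * (p.2 : G) with hf
  have hsub : wordBall (S : Set G) n ⊆ Set.range f := by
    rintro g ⟨l, hmem, hlen, hprod⟩
    have hlL : ∀ x ∈ l, x ∈ L := fun x hx => Finset.mem_toList.mpr (hST x (hmem x hx))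
    obtain ⟨A, c, hlenA, hsum, hcnorm, hnf⟩ :=
      normalForm T Sm M0 h1 hmul hconj hmono hκ L hLT l hlL
    have hsumn : A.sum ≤ n := le_trans hsum hlen
    have hentry : ∀ x ∈ A, x ≤ n :=
      fun x hx => le_trans (List.single_le_sum (fun _ _ => Nat.zero_le _) x hx) hsumn
    set a : Fin L.length → Fin (n + 1) := fun i =>
      ⟨A.get (Fin.cast hlenA.symm i),
        Nat.lt_succ_of_le (hentry _ (A.get_mem _))⟩ with ha
    have hc : c ∈ D := hD c (hmono _ _ _
      (by have := Nat.mul_le_mul_left M0 (Nat.mul_le_mul hlen hlen); nlinarith) hcnorm)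
    refine ⟨(a, ⟨c, hc⟩), ?_⟩
    have hAeq : (List.ofFn fun i => ((a i : ℕ))) = A := by
      refine List.ext_getElem (by simp [hlenA]) ?_
      intro i hi1 hi2
      simp [ha, List.getElem_ofFn, List.get_eq_getElem]
    show wpow (L.zip (List.ofFn fun i => ((a i : ℕ)))) * c = g
    rw [hAeq, ← hprod, hnf]
  haveI : Finite ((Fin L.length → Fin (n + 1)) × {c : G // c ∈ D}) := by infer_instance
  calc Nat.card (wordBall (S : Set G) n)
      ≤ Nat.card (Set.range f) := Nat.card_mono (Set.finite_range f) hsub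
    _ ≤ Nat.card ((Fin L.length → Fin (n + 1)) × {c : G // c ∈ D}) :=
        Nat.card_le_card_of_surjective (Set.rangeFactorization f) Set.rangeFactorization_surjective
    _ = (n + 1) ^ T.card * D.card := by
        rw [Nat.card_prod, Nat.card_fun]
        have : L.length = T.card := Finset.length_toList T
        simp [Nat.card_eq_fintype_card, this]

end Counting

open Filter in
lemma tendsto_logpoly (cst d : ℕ) (hcst : 0 < cst) :
    Tendsto (fun n : ℕ => Real.log ((cst * (n + 1) ^ d : ℕ) : ℝ) / (n : ℝ))
      atTop (nhds 0) := by
  have h2 : Tendsto (fun n : ℕ => Real.log ((n : ℝ) + 1) / (n : ℝ)) atTop (nhds 0) := by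
    have h1 : Real.log =o[atTop] (id : ℝ → ℝ) := Real.isLittleO_log_id_atTop
    have h2 := h1.comp_tendsto (tendsto_atTop_add_const_right atTop (1 : ℝ) tendsto_id)
    simp only [Function.comp_def, id_eq] at h2
    have h3 : (fun x : ℝ => Real.log (x + 1)) =o[atTop] (fun x : ℝ => x) := by
      refine h2.trans_isBigO (Asymptotics.IsBigO.of_bound 2 ?_)
      filter_upwards [Filter.eventually_ge_atTop (1 : ℝ)] with x hx
      rw [Real.norm_eq_abs, Real.norm_eq_abs, abs_of_nonneg (by linarith),
        abs_of_nonneg (by linarith)]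
      linarith
    exact h3.tendsto_div_nhds_zero.comp (tendsto_natCast_atTop_atTop (R := ℝ))
  have key : ∀ n : ℕ, Real.log ((cst * (n + 1) ^ d : ℕ) : ℝ) / (n : ℝ)
      = Real.log (cst : ℝ) / (n : ℝ) + (d : ℝ) * (Real.log ((n : ℝ) + 1) / (n : ℝ)) := by
    intro n
    have hcast : ((cst * (n + 1) ^ d : ℕ) : ℝ) = (cst : ℝ) * ((n : ℝ) + 1) ^ d := by
      push_cast; ring
    rw [hcast, Real.log_mul (by positivity) (by positivity), Real.log_pow]
    ring
  have := (tendsto_const_div_atTop_nhds_zero_nat (Real.log (cst : ℝ))).add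
    (h2.const_mul (d : ℝ))
  simp only [add_zero, mul_zero] at this
  exact (this.congr fun n => (key n).symm)

lemma growthRate_eq_zero_of_poly (S : Finset G) (cst d : ℕ) (hcst : 0 < cst)
    (hpoly : ∀ n : ℕ, Nat.card (wordBall (S : Set G) n) ≤ cst * (n + 1) ^ d) :
    growthRate (S : Set G) = 0 := by
  have hfin : ∀ n, (wordBall (S : Set G) n).Finite := wordBall_finite S
  have hpos : ∀ n : ℕ, 0 < Nat.card (wordBall (S : Set G) n) := by
    intro n
    haveI := (hfin n).to_subtype
    haveI : Nonempty (wordBall (S : Set G) n) := ⟨⟨1, one_mem_wordBall _ _⟩⟩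
    exact Nat.card_pos
  have hterm0 : ∀ m : ℕ+,
      0 ≤ Real.log (Nat.card ↥(wordBall (S : Set G) (m : ℕ))) / ((m : ℕ) : ℝ) := fun m =>
    div_nonneg (Real.log_nonneg (by exact_mod_cast hpos (m : ℕ))) (by positivity)
  have hbdd : BddBelow (Set.range fun m : ℕ+ =>
      Real.log (Nat.card ↥(wordBall (S : Set G) (m : ℕ))) / ((m : ℕ) : ℝ)) :=
    ⟨0, by rintro x ⟨m, rfl⟩; exact hterm0 m⟩
  have hge : 0 ≤ growthRate (S : Set G) := le_ciInf hterm0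
  have hle : growthRate (S : Set G) ≤ 0 := by
    refine ge_of_tendsto (tendsto_logpoly cst d hcst) ?_
    filter_upwards [Filter.eventually_ge_atTop 1] with n hn
    have h1 : growthRate (S : Set G)
        ≤ Real.log (Nat.card ↥(wordBall (S : Set G) ((⟨n, hn⟩ : ℕ+) : ℕ))) / (((⟨n, hn⟩ : ℕ+) : ℕ) : ℝ) :=
      ciInf_le hbdd (⟨n, hn⟩ : ℕ+)
    refine le_trans h1 ?_
    have hlog : Real.log (Nat.card ↥(wordBall (S : Set G) n))
        ≤ Real.log ((cst * (n + 1) ^ d : ℕ) : ℝ) := by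
      have hc := hpos n
      have := hpoly n
      exact Real.log_le_log (by exact_mod_cast hc) (by exact_mod_cast this)
    exact div_le_div_of_nonneg_right hlog (by positivity) |>.trans_eq rfl
  linarith

lemma commutator_mem (C : Subgroup G) [C.Normal] (hab : ∀ x y : G ⧸ C, Commute x y)
    (a b : G) : b⁻¹ * a⁻¹ * b * a ∈ C := by
  have h := (hab (a : G ⧸ C) (b : G ⧸ C)).eq
  rw [← QuotientGroup.eq_one_iff]
  have hcast : ((b⁻¹ * a⁻¹ * b * a : G) : G ⧸ C)
      = ((b : G ⧸ C))⁻¹ * ((a : G ⧸ C))⁻¹ * ((b : G ⧸ C) * (a : G ⧸ C)) := by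
    simp [mul_assoc]
  rw [hcast, ← h]
  group

lemma finite_mulAut_of_isCyclic (H : Type*) [Group H] [hH : IsCyclic H] :
    Finite (MulAut H) := by
  have hfin : Finite (ZMod (Nat.card H))ˣ := by
    obtain h | h := Nat.eq_zero_or_pos (Nat.card H)
    · rw [h]; exact inferInstanceAs (Finite ℤˣ)
    · haveI : NeZero (Nat.card H) := ⟨h.ne'⟩
      infer_instance
  exact Finite.of_equiv _ ((MulAut.congr (zmodCyclicMulEquiv hH)).toEquiv.symm.trans
    (MulEquiv.toAdditive.trans (ZMod.AddAutEquivUnits (Nat.card H)).toEquiv)).symm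

lemma virtually_nilpotent (C : Subgroup G) [C.Normal] (hC : IsCyclic ↥C)
    (hab : ∀ x y : G ⧸ C, Commute x y) :
    ∃ H : Subgroup G, H.FiniteIndex ∧ Group.IsNilpotent ↥H := by
  classical
  refine ⟨Subgroup.centralizer (C : Set G), ?_, ?_⟩
  · haveI : Finite (MulAut ↥C) := @finite_mulAut_of_isCyclic _ _ hC
    haveI : (MonoidHom.ker (MulAut.conjNormal (H := C) : G →* MulAut ↥C)).FiniteIndex :=
      Subgroup.finiteIndex_ker _
    refine Subgroup.finiteIndex_of_le
      (H := MonoidHom.ker (MulAut.conjNormal (H := C) : G →* MulAut ↥C)) ?_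
    intro g hg
    rw [Subgroup.mem_centralizer_iff]
    intro h hh
    have h1 : MulAut.conjNormal (H := C) g = 1 := hg
    have h2 : ((MulAut.conjNormal (H := C) g) ⟨h, hh⟩ : G) = g * h * g⁻¹ :=
      MulAut.conjNormal_apply g ⟨h, hh⟩
    rw [h1] at h2
    simp only [MulAut.one_apply] at h2
    conv_lhs => rw [h2]
    group
  · set H := Subgroup.centralizer (C : Set G) with hHdef
    set C' := C.subgroupOf H with hC'def
    have hcent : C' ≤ Subgroup.center ↥H := by
      intro x hx
      rw [Subgroup.mem_center_iff]
      intro h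
      have hcomm := (Subgroup.mem_centralizer_iff.mp h.2) (x : G)
        (Subgroup.mem_subgroupOf.mp hx)
      exact Subtype.ext hcomm.symm
    have hcomm : ∀ x y : ↥H ⧸ C', Commute x y := by
      intro x y
      induction x using QuotientGroup.induction_on with
      | H a =>
      induction y using QuotientGroup.induction_on with
      | H b =>
      show _ = _
      rw [← QuotientGroup.mk_mul, ← QuotientGroup.mk_mul, QuotientGroup.eq]
      rw [Subgroup.mem_subgroupOf]
      have : (((a * b)⁻¹ * (b * a) : ↥H) : G) = (b:G)⁻¹ * (a:G)⁻¹ * (b:G) * (a:G) := by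
        push_cast; group
      rw [this]
      exact commutator_mem C hab (a : G) (b : G)
    letI : CommGroup (↥H ⧸ C') :=
      { (inferInstance : Group (↥H ⧸ C')) with mul_comm := hcomm }
    refine isNilpotent_of_ker_le_center (QuotientGroup.mk' C') ?_
    rw [QuotientGroup.ker_mk']
    exact hcent

lemma poly_bound (C : Subgroup G) [hN : C.Normal] (hC : IsCyclic ↥C)
    (hab : ∀ x y : G ⧸ C, Commute x y) (S : Finset G) :
    ∃ cst d : ℕ, 0 < cst ∧
      ∀ n : ℕ, Nat.card (wordBall (S : Set G) n) ≤ cst * (n + 1) ^ d := by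
  classical
  set T : Finset G := S ∪ S.image (·⁻¹) with hT
  have hST : ∀ x : G, (x ∈ S ∨ x⁻¹ ∈ S) → x ∈ T := by
    intro x h
    rcases h with h | h
    · exact Finset.mem_union_left _ h
    · exact Finset.mem_union_right _ (Finset.mem_image.mpr ⟨x⁻¹, h, inv_inv x⟩)
  obtain ⟨t₀, ht₀⟩ := @IsCyclic.exists_generator _ _ hC
  set t : G := (t₀ : G) with htdef
  have htC : t ∈ C := t₀.2
  have hmemC : ∀ g : G, g ∈ C → ∃ j : ℤ, t ^ j = g := by
    intro g hg
    obtain ⟨j, hj⟩ := Subgroup.mem_zpowers_iff.mp (ht₀ ⟨g, hg⟩)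
    refine ⟨j, ?_⟩
    have := congrArg (Subtype.val) hj
    rwa [SubgroupClass.coe_zpow] at this
  by_cases hfin : Finite ↥C
  · -- C finite : Sm B c := c ∈ C
    have hCset : (C : Set G).Finite := Set.finite_coe_iff.mp hfin
    set D : Finset G := hCset.toFinset with hD
    refine ⟨D.card, T.card, ?_, ?_⟩
    · exact Finset.card_pos.mpr ⟨1, hCset.mem_toFinset.mpr C.one_mem⟩
    · intro n
      have hcard := card_wordBall_le S T (fun _ c => c ∈ C) 0
        C.one_mem
        (fun _ _ c d hc hd => C.mul_mem hc hd)
        (fun x _ c hc => hN.conj_mem c hc x)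
        (fun _ _ _ _ hc => hc)
        (fun x _ y _ => commutator_mem C hab x y)
        hST n D (fun c hc => hCset.mem_toFinset.mpr hc)
      calc Nat.card (wordBall (S : Set G) n) ≤ (n + 1) ^ T.card * D.card := hcard
        _ = D.card * (n + 1) ^ T.card := mul_comm _ _
  · -- C infinite
    haveI : Infinite ↥C := not_finite_iff_infinite.mp hfin
    have htinj : Function.Injective (fun j : ℤ => t ^ j) := by
      rw [injective_zpow_iff_not_isOfFinOrder]
      have h0 : orderOf t₀ = 0 := Infinite.orderOf_eq_zero_of_forall_mem_zpowers ht₀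
      have h1 : orderOf t = 0 := by
        have h2 := orderOf_injective C.subtype Subtype.coe_injective t₀
        exact h2.trans h0
      exact orderOf_eq_zero_iff.mp h1
    have hconjt : ∀ x : G, ∃ e : ℤ, e.natAbs = 1 ∧ x * t * x⁻¹ = t ^ e := by
      intro x
      obtain ⟨e, he⟩ := hmemC _ (hN.conj_mem t htC x)
      obtain ⟨f, hf⟩ := hmemC _ (hN.conj_mem t htC x⁻¹)
      rw [inv_inv] at hf
      have key : t ^ (f * e) = t ^ (1 : ℤ) := by
        rw [zpow_mul, hf, zpow_one]
        calc (x⁻¹ * t * x) ^ e = x⁻¹ * t ^ e * x := by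
              simpa using (conj_zpow (i := e) (a := x⁻¹) (b := t))
          _ = x⁻¹ * (x * t * x⁻¹) * x := by rw [he]
          _ = t := by group
      have hfe : f * e = 1 := htinj key
      have : IsUnit e := IsUnit.of_mul_eq_one f (by linarith [mul_comm f e])
      rcases Int.isUnit_iff.mp this with h | h <;>
        exact ⟨e, by simp [h], he.symm⟩
    set Sm : ℕ → G → Prop := fun B c => ∃ j : ℤ, t ^ j = c ∧ j.natAbs ≤ B with hSm
    have h1 : Sm 0 1 := ⟨0, by simp, by simp⟩
    have hmul : ∀ B1 B2 c d, Sm B1 c → Sm B2 d → Sm (B1 + B2) (c * d) := by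
      rintro B1 B2 c d ⟨j1, rfl, hb1⟩ ⟨j2, rfl, hb2⟩
      exact ⟨j1 + j2, (zpow_add t j1 j2),
        le_trans (Int.natAbs_add_le j1 j2) (Nat.add_le_add hb1 hb2)⟩
    have hconj : ∀ (x : G) (B c), Sm B c → Sm B (x * c * x⁻¹) := by
      rintro x B c ⟨j, rfl, hb⟩
      obtain ⟨e, he1, he2⟩ := hconjt x
      refine ⟨e * j, ?_, ?_⟩
      · rw [zpow_mul, ← he2, conj_zpow]
      · rw [Int.natAbs_mul, he1, one_mul]; exact hb
    have hmono : ∀ B1 B2 c, B1 ≤ B2 → Sm B1 c → Sm B2 c := by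
      rintro B1 B2 c hB ⟨j, rfl, hb⟩; exact ⟨j, rfl, le_trans hb hB⟩
    set ν : G → ℕ := fun g => if h : ∃ j : ℤ, t ^ j = g then h.choose.natAbs else 0 with hν
    have hνSm : ∀ g ∈ C, Sm (ν g) g := by
      intro g hg
      have h : ∃ j : ℤ, t ^ j = g := hmemC g hg
      refine ⟨h.choose, h.choose_spec, ?_⟩
      simp only [hν, dif_pos h]
      exact le_rfl
    set M0 : ℕ := T.sup (fun x => T.sup fun y => ν (y⁻¹ * x⁻¹ * y * x)) with hM0
    have hκ : ∀ x ∈ T, ∀ y ∈ T, Sm M0 (y⁻¹ * x⁻¹ * y * x) := by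
      intro x hx y hy
      refine hmono _ _ _ ?_ (hνSm _ (commutator_mem C hab x y))
      exact le_trans (Finset.le_sup (f := fun y => ν (y⁻¹ * x⁻¹ * y * x)) hy)
        (Finset.le_sup (f := fun x => T.sup fun y => ν (y⁻¹ * x⁻¹ * y * x)) hx)
    refine ⟨2 * M0 + 1, T.card + 2, by positivity, ?_⟩
    intro n
    set D : Finset G := (Finset.Icc (-(M0 * n * n : ℤ)) (M0 * n * n)).image (fun j => t ^ j)
      with hDdef
    have hD : ∀ c, Sm (M0 * n * n) c → c ∈ D := by
      rintro c ⟨j, rfl, hb⟩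
      refine Finset.mem_image.mpr ⟨j, Finset.mem_Icc.mpr ?_, rfl⟩
      have : (j.natAbs : ℤ) ≤ (M0 * n * n : ℕ) := Int.ofNat_le.mpr hb
      rw [← Int.abs_eq_natAbs] at this
      constructor <;> [skip; skip] <;> push_cast at this ⊢ <;>
        cases abs_le.mp this <;> omega
    have hDcard : D.card ≤ 2 * (M0 * n * n) + 1 := by
      refine le_trans Finset.card_image_le ?_
      rw [Int.card_Icc, Int.toNat_le]
      push_cast
      ring_nf
      linarith
    have hcard := card_wordBall_le S T Sm M0 h1 hmul hconj hmono hκ hST n D hD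
    calc Nat.card (wordBall (S : Set G) n)
        ≤ (n + 1) ^ T.card * D.card := hcard
      _ ≤ (n + 1) ^ T.card * (2 * (M0 * n * n) + 1) :=
          Nat.mul_le_mul_left _ hDcard
      _ ≤ (n + 1) ^ T.card * ((2 * M0 + 1) * (n + 1) ^ 2) := by
          refine Nat.mul_le_mul_left _ ?_
          nlinarith
      _ = (2 * M0 + 1) * (n + 1) ^ (T.card + 2) := by
          rw [pow_add]; ring

end CBA

/-- A cyclic-by-abelian group is virtually nilpotent and has no
finite generating set of positive exponential growth rate. -/
theorem cyclic_by_abelian_not_exponential {G : Type*} [Group G]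
    (C : Subgroup G) [C.Normal] (hC : IsCyclic ↥C)
    (hab : ∀ x y : G ⧸ C, Commute x y) :
    (∃ H : Subgroup G, H.FiniteIndex ∧ Group.IsNilpotent ↥H) ∧
    ∀ S : Finset G, Subgroup.closure (S : Set G) = ⊤ →
      growthRate (S : Set G) = 0 := by
  constructor
  · exact CBA.virtually_nilpotent C hC hab
  · intro S _
    obtain ⟨cst, d, hcst, hpoly⟩ := CBA.poly_bound C hC hab S
    exact CBA.growthRate_eq_zero_of_poly S cst d hcst hpoly
end

section
/- Let G be a group with a normal subgroup N that satisfies a group law. If every subgroup of G/N either satisfies a fixed group law or contains an N'-short nonabelian free subgroup with respect to every finite generating set, then every subgroup H of G either satisfies a (composite) group law or contains a short nonabelian free subgroup; moreover, if a subgroup H ≤ G contains a nonabelian free subgroup F of rank 2, then the image of F in G/N is free of rank 2 (the intersection F ∩ N is trivial). -/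
open List

namespace NoLawAux

set_option linter.unusedSectionVars false

variable {α : Type*} [DecidableEq α]

/-- Flip the sign of a letter. -/
def flipb (s : α × Bool) : α × Bool := (s.1, !s.2)

@[simp] lemma flipb_flipb (s : α × Bool) : flipb (flipb s) = s := by
  simp [flipb]

lemma flipb_ne (s : α × Bool) : flipb s ≠ s := by
  simp [flipb, Prod.ext_iff]

lemma invRev_eq (L : List (α × Bool)) : FreeGroup.invRev L = (L.map flipb).reverse := rfl

lemma invRev_cons (s : α × Bool) (L : List (α × Bool)) :
    FreeGroup.invRev (s :: L) = FreeGroup.invRev L ++ [flipb s] := by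
  simp [invRev_eq]

lemma invRev_replicate (n : ℕ) (s : α × Bool) :
    FreeGroup.invRev (List.replicate n s) = List.replicate n (flipb s) := by
  simp [invRev_eq, List.reverse_replicate]

lemma reduce_cons_of_ne (s : α × Bool) (L : List (α × Bool)) (hL : FreeGroup.reduce L = L)
    (h : ∀ p ∈ L.head?, p ≠ flipb s) :
    FreeGroup.reduce (s :: L) = s :: L := by
  rw [FreeGroup.reduce.cons, hL]
  cases L with
  | nil => rfl
  | cons hd tl =>
    have : hd ≠ flipb s := h hd (by simp)
    have h2 : ¬ (s.1 = hd.1 ∧ s.2 = !hd.2) := by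
      rintro ⟨h1, h2⟩
      exact this (by simp [flipb, Prod.ext_iff, h1, h2])
    simp [h2]

lemma reduce_cons_cancel (s : α × Bool) (t : List (α × Bool))
    (hL : FreeGroup.reduce (flipb s :: t) = flipb s :: t) :
    FreeGroup.reduce (s :: flipb s :: t) = t := by
  rw [FreeGroup.reduce.cons, hL]
  simp [flipb]

/-- W1: no-cancellation single letter multiplication. -/
lemma toWord_single_mul (s : α × Bool) (g : FreeGroup α)
    (h : ∀ p ∈ g.toWord.head?, p ≠ flipb s) :
    (FreeGroup.mk [s] * g).toWord = s :: g.toWord := by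
  conv_lhs => rw [← FreeGroup.mk_toWord (x := g)]
  rw [FreeGroup.mul_mk, FreeGroup.toWord_mk]
  simpa using reduce_cons_of_ne s g.toWord g.reduce_toWord h

/-- W2: cancellation single letter multiplication. -/
lemma toWord_single_mul_cancel (s : α × Bool) (g : FreeGroup α)
    (h : g.toWord.head? = some (flipb s)) :
    (FreeGroup.mk [s] * g).toWord = g.toWord.tail := by
  obtain ⟨t, ht⟩ : ∃ t, g.toWord = flipb s :: t := by
    cases hL : g.toWord with
    | nil => rw [hL] at h; simp at h
    | cons hd tl => rw [hL] at h; simp at h; exact ⟨tl, by rw [h]⟩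
  conv_lhs => rw [← FreeGroup.mk_toWord (x := g)]
  rw [FreeGroup.mul_mk, FreeGroup.toWord_mk, ht]
  have := g.reduce_toWord
  rw [ht] at this
  simpa [ht] using reduce_cons_cancel s t this

/-- Decompose a list into leading copies of `c` followed by a rest not starting with `c`. -/
lemma exists_lead_decomp (c : α × Bool) (L : List (α × Bool)) :
    ∃ k R, L = List.replicate k c ++ R ∧ ∀ p ∈ R.head?, p ≠ c := by
  classical
  set p : α × Bool → Bool := fun y => decide (y = c) with hp
  refine ⟨(L.takeWhile p).length, L.dropWhile p, ?_, ?_⟩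
  · have h1 : L.takeWhile p = List.replicate (L.takeWhile p).length c := by
      apply List.eq_replicate_of_mem
      intro x hx
      have := List.mem_takeWhile_imp hx
      simpa [hp] using this
    conv_lhs => rw [← (List.takeWhile_append_dropWhile (p := p) : L.takeWhile p ++ L.dropWhile p = L)]
    rw [← h1]
  · intro q hq
    have := List.head?_dropWhile_not p L
    cases hh : (L.dropWhile p).head? with
    | none => rw [hh] at hq; simp at hq
    | some x =>
      rw [hh] at hq this
      simp only [Option.mem_def, Option.some.injEq] at hq
      subst hq
      simpa [hp] using this

lemma head_replicate_append (j : ℕ) (c : α × Bool) (R : List (α × Bool)) (q : α × Bool)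
    (hq : q ∈ (List.replicate (j+1) c ++ R).head?) : q = c := by
  rw [List.replicate_succ, List.cons_append, List.head?_cons] at hq
  simpa [eq_comm] using hq

/-- Key lemma: multiplication by `mk [s] ^ m` on a decomposed word. -/
lemma pow_mul_word (s : α × Bool) (m : ℕ) (g : FreeGroup α) (k : ℕ) (R : List (α × Bool))
    (hg : g.toWord = List.replicate k (flipb s) ++ R) (hR : ∀ p ∈ R.head?, p ≠ flipb s) :
    (FreeGroup.mk [s] ^ m * g).toWord =
      if m ≤ k then List.replicate (k - m) (flipb s) ++ R
      else List.replicate (m - k) s ++ R := by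
  induction m with
  | zero => simpa using hg
  | succ m ih =>
    rw [pow_succ', mul_assoc]
    by_cases h1 : m + 1 ≤ k
    · have h2 : m ≤ k := by omega
      rw [if_pos h1]
      have hcancel : (FreeGroup.mk [s] ^ m * g).toWord.head? = some (flipb s) := by
        rw [ih, if_pos h2]
        have : k - m = (k - (m+1)) + 1 := by omega
        rw [this, List.replicate_succ, List.cons_append, List.head?_cons]
      rw [toWord_single_mul_cancel s _ hcancel, ih, if_pos h2]
      have : k - m = (k - (m+1)) + 1 := by omega
      rw [this, List.replicate_succ, List.cons_append, List.tail_cons]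
    · rw [if_neg h1]
      have hnc : ∀ p ∈ (FreeGroup.mk [s] ^ m * g).toWord.head?, p ≠ flipb s := by
        rw [ih]
        by_cases h2 : m ≤ k
        · have hmk : m = k := by omega
          rw [if_pos h2, hmk, Nat.sub_self, List.replicate_zero, List.nil_append]
          exact hR
        · rw [if_neg h2]
          have : m - k = (m - k - 1) + 1 := by omega
          rw [this]
          intro q hq
          have hqs := head_replicate_append _ _ _ _ hq
          rw [hqs]
          exact fun h => flipb_ne s h.symm
      rw [toWord_single_mul s _ hnc, ih]
      by_cases h2 : m ≤ k
      · have hmk : m = k := by omega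
        subst hmk
        rw [if_pos h2, Nat.sub_self, List.replicate_zero, List.nil_append]
        have : m + 1 - m = 1 := by omega
        rw [this]
        rfl
      · rw [if_neg h2]
        have : m + 1 - k = (m - k) + 1 := by omega
        rw [this, List.replicate_succ, List.cons_append]

lemma toWord_mk_pow (s : α × Bool) (m : ℕ) :
    ((FreeGroup.mk [s] : FreeGroup α) ^ m).toWord = List.replicate m s := by
  have := pow_mul_word s m 1 0 [] (by simp [FreeGroup.toWord_one]) (by simp)
  simpa using this

/-! ### Ping pong for the family `a^(n+1) b a^-(n+1)` -/

/-- The prefix words. -/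
def Pw (a b : α) (n : ℕ) (ε : Bool) : List (α × Bool) :=
  List.replicate (n+1) (a, true) ++ [(b, ε)]

/-- The conjugated generators. -/
def cElt (a b : α) (n : ℕ) (ε : Bool) : FreeGroup α :=
  FreeGroup.mk [(a, true)] ^ (n+1) * (FreeGroup.mk [(b, ε)] * FreeGroup.mk [(a, false)] ^ (n+1))

lemma mk_single_inv (s : α × Bool) : (FreeGroup.mk [s])⁻¹ = FreeGroup.mk [flipb s] := by
  rw [FreeGroup.inv_mk]
  rfl

lemma mk_af (a : α) : (FreeGroup.mk [(a, true)] : FreeGroup α)⁻¹ = FreeGroup.mk [(a, false)] := by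
  rw [mk_single_inv]; rfl

lemma mk_bfl (b : α) (ε : Bool) :
    (FreeGroup.mk [(b, ε)] : FreeGroup α)⁻¹ = FreeGroup.mk [(b, !ε)] := by
  rw [mk_single_inv]; rfl

lemma cElt_inv (a b : α) (n : ℕ) (ε : Bool) : (cElt a b n ε)⁻¹ = cElt a b n (!ε) := by
  unfold cElt
  rw [← mk_af, ← mk_bfl b ε]
  group

lemma lead_decomp_unique (c : α × Bool) :
    ∀ (k₁ : ℕ) {k₂ : ℕ} {R₁ R₂ : List (α × Bool)},
    List.replicate k₁ c ++ R₁ = List.replicate k₂ c ++ R₂ →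
    (∀ p ∈ R₁.head?, p ≠ c) → (∀ p ∈ R₂.head?, p ≠ c) → k₁ = k₂ ∧ R₁ = R₂ := by
  intro k₁
  induction k₁ with
  | zero =>
    intro k₂ R₁ R₂ h h₁ h₂
    cases k₂ with
    | zero => simpa using h
    | succ j =>
      exfalso
      simp only [List.replicate_zero, List.nil_append, List.replicate_succ,
        List.cons_append] at h
      exact h₁ c (by rw [h]; simp) rfl
  | succ j ih =>
    intro k₂ R₁ R₂ h h₁ h₂
    cases k₂ with
    | zero =>
      exfalso
      simp only [List.replicate_zero, List.nil_append, List.replicate_succ,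
        List.cons_append] at h
      exact h₂ c (by rw [← h]; simp) rfl
    | succ j₂ =>
      simp only [List.replicate_succ, List.cons_append, List.cons.injEq] at h
      obtain ⟨h3, h4⟩ := ih h.2 h₁ h₂
      exact ⟨by omega, h4⟩

lemma Pw_incomp {a b : α} (hab : a ≠ b) {n m : ℕ} {ε δ : Bool} {L : List (α × Bool)}
    (h1 : Pw a b n ε <+: L) (h2 : Pw a b m δ <+: L) : n = m ∧ ε = δ := by
  obtain ⟨t₁, ht₁⟩ := h1
  obtain ⟨t₂, ht₂⟩ := h2
  rw [← ht₂] at ht₁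
  unfold Pw at ht₁
  rw [List.append_assoc, List.append_assoc, List.singleton_append, List.singleton_append] at ht₁
  have hh : ∀ (ε : Bool) (t : List (α × Bool)), ∀ p ∈ ((b,ε) :: t).head?, p ≠ (a, true) := by
    intro ε t p hp
    simp only [List.head?_cons, Option.mem_def, Option.some.injEq] at hp
    subst hp
    simp [Prod.ext_iff]
    intro h; exact absurd h.symm hab
  obtain ⟨e1, e2⟩ := lead_decomp_unique (a, true) (n+1) ht₁ (hh ε t₁) (hh δ t₂)
  refine ⟨by omega, ?_⟩
  have := (List.cons_eq_cons.mp e2).1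
  simpa using this

/-- Main computation: multiplying by a conjugated generator creates the expected prefix. -/
lemma cElt_mul_mem {a b : α} (hab : a ≠ b) (n : ℕ) (ε : Bool) (g : FreeGroup α)
    (hg : ¬ (Pw a b n (!ε) <+: g.toWord)) :
    Pw a b n ε <+: (cElt a b n ε * g).toWord := by
  obtain ⟨k, R, hdec, hR⟩ := exists_lead_decomp (a, true) g.toWord
  have hflip : flipb ((a, false) : α × Bool) = (a, true) := rfl
  have hW1 : (FreeGroup.mk [(a, false)] ^ (n+1) * g).toWord =
      if n+1 ≤ k then List.replicate (k - (n+1)) (a, true) ++ R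
      else List.replicate (n+1-k) (a, false) ++ R := by
    refine pow_mul_word _ _ _ k R ?_ ?_ <;> rw [hflip] <;> assumption
  have hhead : ∀ p ∈ (FreeGroup.mk [(a, false)] ^ (n+1) * g).toWord.head?, p ≠ (b, !ε) := by
    rw [hW1]
    by_cases h1 : n+1 ≤ k
    · rw [if_pos h1]
      by_cases h2 : k = n+1
      · rw [h2, Nat.sub_self, List.replicate_zero, List.nil_append]
        intro p hp hpb
        subst hpb
        cases R with
        | nil => simp at hp
        | cons hd tl =>
          simp only [List.head?_cons, Option.mem_def, Option.some.injEq] at hp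
          apply hg
          refine ⟨tl, ?_⟩
          unfold Pw
          rw [hdec, h2, List.append_assoc, List.singleton_append, hp]
      · have : k - (n+1) = (k - (n+1) - 1) + 1 := by omega
        rw [this]
        intro p hp
        rw [head_replicate_append _ _ _ _ hp]
        simp [Prod.ext_iff]
        intro h; exact absurd h hab
    · rw [if_neg h1]
      have : n+1-k = (n+1-k-1)+1 := by omega
      rw [this]
      intro p hp
      rw [head_replicate_append _ _ _ _ hp]
      simp [Prod.ext_iff]
      intro h; exact absurd h hab
  have hW2 : (FreeGroup.mk [(b, ε)] * (FreeGroup.mk [(a, false)] ^ (n+1) * g)).toWord =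
      (b, ε) :: (FreeGroup.mk [(a, false)] ^ (n+1) * g).toWord := by
    apply toWord_single_mul
    intro p hp
    have := hhead p hp
    simpa [flipb] using this
  have hW3 : (cElt a b n ε * g).toWord =
      List.replicate (n+1) (a, true) ++
        ((b, ε) :: (FreeGroup.mk [(a, false)] ^ (n+1) * g).toWord) := by
    unfold cElt
    rw [mul_assoc, mul_assoc]
    have := pow_mul_word ((a, true) : α × Bool) (n+1)
      (FreeGroup.mk [(b, ε)] * (FreeGroup.mk [(a, false)] ^ (n+1) * g)) 0
      ((b, ε) :: (FreeGroup.mk [(a, false)] ^ (n+1) * g).toWord)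
      (by rw [hW2]; simp)
      (by intro p hp
          simp only [List.head?_cons, Option.mem_def, Option.some.injEq] at hp
          subst hp
          simp [flipb, Prod.ext_iff]
          intro h; exact absurd h.symm hab)
    rw [← mul_assoc, ← mul_assoc] at this ⊢
    rw [this]
    simp
  rw [hW3]
  refine ⟨(FreeGroup.mk [(a, false)] ^ (n+1) * g).toWord, ?_⟩
  unfold Pw
  rw [List.append_assoc, List.singleton_append]

lemma of_eq_mk (a : α) : FreeGroup.of a = FreeGroup.mk [(a, true)] := rfl

lemma cElt_eq (a b : α) (n : ℕ) :
    cElt a b n true = FreeGroup.of a ^ (n+1) * FreeGroup.of b * (FreeGroup.of a ^ (n+1))⁻¹ := by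
  unfold cElt
  rw [of_eq_mk a, of_eq_mk b, ← inv_pow, mk_af, mul_assoc]

/-- The elements `a^(n+1) b a^-(n+1)`, `n : ℕ`, freely generate a free subgroup. -/
theorem free_family {β : Type} [DecidableEq β] {a b : β} (hab : a ≠ b) :
    Function.Injective
      ⇑(FreeGroup.lift (fun n : ℕ => cElt a b n true) : FreeGroup ℕ →* FreeGroup β) := by
  refine FreeGroup.injective_lift_of_ping_pong (ι := ℕ) (G := FreeGroup β) (α := FreeGroup β)
      (fun n : ℕ => cElt a b n true)
      (fun n => {g : FreeGroup β | Pw a b n true <+: g.toWord})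
      (fun n => {g : FreeGroup β | Pw a b n false <+: g.toWord})
      ?_ ?_ ?_ ?_ ?_ ?_
  · intro i
    refine ⟨cElt a b i true, ?_⟩
    have h0 : ¬ (Pw a b i (!true) <+: (1 : FreeGroup β).toWord) := by
      rw [FreeGroup.toWord_one]
      simp only [List.prefix_nil, Pw, Bool.not_true]
      simp
    have := cElt_mul_mem hab i true 1 h0
    simpa using this
  · intro i j hij
    rw [Function.onFun, Set.disjoint_left]
    intro g hgi hgj
    exact hij (Pw_incomp hab hgi hgj).1
  · intro i j hij
    rw [Function.onFun, Set.disjoint_left]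
    intro g hgi hgj
    exact hij (Pw_incomp hab hgi hgj).1
  · intro i j
    rw [Set.disjoint_left]
    intro g hgi hgj
    exact absurd (Pw_incomp hab hgi hgj).2 (by simp)
  · intro i g hg
    rw [Set.mem_smul_set] at hg
    obtain ⟨h, hh, rfl⟩ := hg
    rw [smul_eq_mul]
    exact cElt_mul_mem hab i true h hh
  · intro i g hg
    rw [Set.mem_smul_set] at hg
    obtain ⟨h, hh, rfl⟩ := hg
    rw [smul_eq_mul, Pi.inv_apply, cElt_inv]
    exact cElt_mul_mem hab i false h hh

/-! ### Hom utilities -/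

lemma hom_comp_lift {β : Type*} {H K : Type*} [Group H] [Group K] (φ : H →* K) (f : β → H) :
    φ.comp (FreeGroup.lift f) = FreeGroup.lift (fun x => φ (f x)) := by
  apply FreeGroup.ext_hom
  intro x
  simp

lemma map_injective_of_retraction {β γ : Type*} (f : β → γ) (r : γ → β) (h : ∀ x, r (f x) = x) :
    Function.Injective (FreeGroup.map f : FreeGroup β → FreeGroup γ) := by
  intro g₁ g₂ hg
  have := congrArg (FreeGroup.map r) hg
  rw [FreeGroup.map.comp, FreeGroup.map.comp] at this
  have hrf : (r ∘ f) = id := funext h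
  rwa [hrf, FreeGroup.map.id, FreeGroup.map.id] at this

/-! ### Commutation lemmas -/

lemma invRev_ne_nil {L : List (α × Bool)} (h : L ≠ []) : FreeGroup.invRev L ≠ [] := by
  intro hc
  have : L.length = 0 := by
    have := congrArg List.length hc
    simpa [FreeGroup.invRev_length] using this
  exact h (List.eq_nil_of_length_eq_zero this)

lemma head?_invRev (L : List (α × Bool)) :
    (FreeGroup.invRev L).head? = L.getLast?.map flipb := by
  rw [invRev_eq, List.head?_reverse, List.getLast?_map]

lemma invRev_dropLast (L : List (α × Bool)) :
    FreeGroup.invRev (L.dropLast) = (FreeGroup.invRev L).tail := by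
  rw [invRev_eq, invRev_eq, List.tail_reverse, List.map_dropLast]

lemma eq_replicate_of_cons_eq_append {s : α × Bool} :
    ∀ {L : List (α × Bool)}, s :: L = L ++ [s] → L = List.replicate L.length s := by
  intro L
  induction L with
  | nil => intro; rfl
  | cons h t ih =>
    intro he
    rw [List.cons_append, List.cons_eq_cons] at he
    obtain ⟨h1, h2⟩ := he
    subst h1
    have := ih h2
    rw [List.length_cons, List.replicate_succ, ← this]

lemma eq_replicate_of_tail_eq_dropLast {L : List (α × Bool)} {p : α × Bool}
    (hp : L.head? = some p) (h : L.tail = L.dropLast) : L = List.replicate L.length p := by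
  have hlen : ∀ i, ∀ (hi : i + 1 < L.length), L[i+1] = L[i] := by
    intro i hi
    have h1 : i < L.tail.length := by simp; omega
    have h2 : i < L.dropLast.length := by simp; omega
    calc L[i+1] = L.tail[i] := (List.getElem_tail h1).symm
    _ = L.dropLast[i] := List.getElem_of_eq h h1
    _ = L[i] := List.getElem_dropLast h2
  have hL0 : ∀ i, ∀ (hi : i < L.length), L[i] = p := by
    intro i
    induction i with
    | zero =>
      intro hi
      have : L.head? = some L[0] := by
        cases L with
        | nil => simp at hi
        | cons a t => simp
      rw [this] at hp
      simpa [eq_comm] using hp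
    | succ j ih =>
      intro hi
      rw [hlen j hi]
      exact ih (by omega)
  apply List.ext_getElem (by simp)
  intro i h1 h2
  rw [hL0 i h1, List.getElem_replicate]

lemma mk_replicate_true (c : α) (m : ℕ) :
    FreeGroup.mk (List.replicate m (c, true)) = (FreeGroup.of c) ^ (m : ℤ) := by
  apply FreeGroup.toWord_injective
  rw [zpow_natCast, FreeGroup.toWord_of_pow, FreeGroup.toWord_mk, FreeGroup.reduce_replicate]

lemma mk_replicate_false (c : α) (m : ℕ) :
    FreeGroup.mk (List.replicate m (c, false)) = (FreeGroup.of c) ^ (-(m : ℤ)) := by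
  have h1 : (FreeGroup.mk (List.replicate m (c, true)) : FreeGroup α)⁻¹
      = FreeGroup.mk (List.replicate m (c, false)) := by
    rw [FreeGroup.inv_mk, invRev_replicate]
    rfl
  rw [← h1, mk_replicate_true, ← zpow_neg]

lemma head_cond_of_ne {z : FreeGroup α} {p : α × Bool} (hhead : z.toWord.head? = some p)
    (s : α × Bool) (hps : p ≠ flipb s) : ∀ q ∈ z.toWord.head?, q ≠ flipb s := by
  intro q hq
  rw [hhead] at hq
  replace hq : p = q := by simpa using hq
  subst hq
  exact hps

lemma flipb_ct (c : α) : flipb ((c, true) : α × Bool) = (c, false) := rfl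
lemma flipb_cf (c : α) : flipb ((c, false) : α × Bool) = (c, true) := rfl

/-- C1: no generator conjugates a nontrivial element to its inverse. -/
lemma no_conj_inv {c : α} {z : FreeGroup α}
    (h : FreeGroup.of c * z * (FreeGroup.of c)⁻¹ = z⁻¹) : z = 1 := by
  by_contra hz
  have hL : z.toWord ≠ [] := fun hn => hz (FreeGroup.toWord_eq_nil_iff.mp hn)
  have hE : FreeGroup.mk [(c, true)] * z = (FreeGroup.mk [(c, false)] * z)⁻¹ := by
    rw [mul_inv_rev, mk_bfl c false]
    have : (FreeGroup.mk [(c, !false)] : FreeGroup α) = FreeGroup.of c := rfl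
    rw [this, ← h, of_eq_mk]
    group
  have hEw := congrArg FreeGroup.toWord hE
  rw [FreeGroup.toWord_inv] at hEw
  cases hLc : z.toWord with
  | nil => exact hL hLc
  | cons p T =>
  have hhead : z.toWord.head? = some p := by rw [hLc]; rfl
  have hpos : 0 < z.toWord.length := by rw [hLc]; simp
  by_cases hp1 : p = ((c, false) : α × Bool)
  · have w1 : (FreeGroup.mk [(c, true)] * z).toWord = z.toWord.tail :=
      toWord_single_mul_cancel _ _ (by rw [hhead, hp1, flipb_ct])
    have w2 : (FreeGroup.mk [(c, false)] * z).toWord = (c, false) :: z.toWord :=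
      toWord_single_mul _ _ (head_cond_of_ne hhead _
        (by rw [hp1, flipb_cf]; simp))
    have := congrArg List.length hEw
    rw [w1, w2, FreeGroup.invRev_length] at this
    simp only [List.length_tail, List.length_cons] at this
    omega
  · by_cases hp2 : p = ((c, true) : α × Bool)
    · have w1 : (FreeGroup.mk [(c, true)] * z).toWord = (c, true) :: z.toWord :=
        toWord_single_mul _ _ (head_cond_of_ne hhead _
          (by rw [hp2, flipb_ct]; simp))
      have w2 : (FreeGroup.mk [(c, false)] * z).toWord = z.toWord.tail :=
        toWord_single_mul_cancel _ _ (by rw [hhead, hp2, flipb_cf])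
      have := congrArg List.length hEw
      rw [w1, w2, FreeGroup.invRev_length] at this
      simp only [List.length_tail, List.length_cons] at this
      omega
    · have w1 : (FreeGroup.mk [(c, true)] * z).toWord = (c, true) :: z.toWord :=
        toWord_single_mul _ _ (head_cond_of_ne hhead _ (by rw [flipb_ct]; exact hp1))
      have w2 : (FreeGroup.mk [(c, false)] * z).toWord = (c, false) :: z.toWord :=
        toWord_single_mul _ _ (head_cond_of_ne hhead _ (by rw [flipb_cf]; exact hp2))
      rw [w1, w2, invRev_cons, flipb_cf] at hEw
      have hlast1 : ((c, true) :: z.toWord).getLast? = z.toWord.getLast? := by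
        rw [hLc]; exact List.getLast?_cons_cons
      have hlast2 : (FreeGroup.invRev z.toWord ++ [(c, true)]).getLast? = some (c, true) :=
        List.getLast?_concat
      have hgl : z.toWord.getLast? = some (c, true) := by
        rw [← hlast1, hEw, hlast2]
      have hhd : ((c, true) : α × Bool) ∈ (FreeGroup.invRev z.toWord ++ [(c,true)]).head? := by
        rw [← hEw]; rfl
      rw [List.head?_append_of_ne_nil _ (invRev_ne_nil hL)] at hhd
      rw [head?_invRev, hgl] at hhd
      simp [flipb] at hhd

/-- C2: an element commuting with a generator is a power of it. -/
lemma commute_single {c : α} {z : FreeGroup α} (h : Commute (FreeGroup.of c) z) :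
    ∃ n : ℤ, z = (FreeGroup.of c) ^ n := by
  by_cases hz : z = 1
  · exact ⟨0, by rw [hz, zpow_zero]⟩
  have hL : z.toWord ≠ [] := fun hn => hz (FreeGroup.toWord_eq_nil_iff.mp hn)
  have hE : FreeGroup.mk [(c, true)] * z = (FreeGroup.mk [(c, false)] * z⁻¹)⁻¹ := by
    rw [mul_inv_rev, mk_bfl c false, inv_inv]
    have h2 : (FreeGroup.mk [(c, !false)] : FreeGroup α) = FreeGroup.of c := rfl
    rw [h2, ← of_eq_mk]
    exact h.eq
  have hEw := congrArg FreeGroup.toWord hE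
  rw [FreeGroup.toWord_inv] at hEw
  cases hLc : z.toWord with
  | nil => exact absurd hLc hL
  | cons p T =>
  have hhead : z.toWord.head? = some p := by rw [hLc]; rfl
  have hpos : 0 < z.toWord.length := by rw [hLc]; simp
  have hL' : z⁻¹.toWord = FreeGroup.invRev z.toWord := FreeGroup.toWord_inv z
  have hL'ne : z⁻¹.toWord ≠ [] := by rw [hL']; exact invRev_ne_nil hL
  cases hLc' : z⁻¹.toWord with
  | nil => exact absurd hLc' hL'ne
  | cons p' T' =>
  have hhead' : z⁻¹.toWord.head? = some p' := by rw [hLc']; rfl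
  by_cases hp1 : p = ((c, false) : α × Bool) <;> by_cases hp2 : p' = ((c, true) : α × Bool)
  · -- both cancel
    have w1 : (FreeGroup.mk [(c, true)] * z).toWord = z.toWord.tail :=
      toWord_single_mul_cancel _ _ (by rw [hhead, hp1, flipb_ct])
    have w2 : (FreeGroup.mk [(c, false)] * z⁻¹).toWord = z⁻¹.toWord.tail :=
      toWord_single_mul_cancel _ _ (by rw [hhead', hp2, flipb_cf])
    rw [w1, w2, hL'] at hEw
    have hid : FreeGroup.invRev ((FreeGroup.invRev z.toWord).tail)
        = z.toWord.dropLast := by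
      rw [← invRev_dropLast, FreeGroup.invRev_invRev]
    rw [hid] at hEw
    have hrep := eq_replicate_of_tail_eq_dropLast hhead hEw
    rw [hp1] at hrep
    refine ⟨-(z.toWord.length : ℤ), ?_⟩
    rw [← mk_replicate_false, ← hrep, FreeGroup.mk_toWord]
  · -- left cancels, right doesn't : length contradiction
    have w1 : (FreeGroup.mk [(c, true)] * z).toWord = z.toWord.tail :=
      toWord_single_mul_cancel _ _ (by rw [hhead, hp1, flipb_ct])
    have w2 : (FreeGroup.mk [(c, false)] * z⁻¹).toWord = (c, false) :: z⁻¹.toWord :=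
      toWord_single_mul _ _ (head_cond_of_ne hhead' _ (by rw [flipb_cf]; exact hp2))
    have := congrArg List.length hEw
    rw [w1, w2, FreeGroup.invRev_length] at this
    simp only [List.length_tail, List.length_cons, FreeGroup.toWord_inv,
      FreeGroup.invRev_length] at this
    omega
  · -- right cancels, left doesn't
    have w1 : (FreeGroup.mk [(c, true)] * z).toWord = (c, true) :: z.toWord :=
      toWord_single_mul _ _ (head_cond_of_ne hhead _ (by rw [flipb_ct]; exact hp1))
    have w2 : (FreeGroup.mk [(c, false)] * z⁻¹).toWord = z⁻¹.toWord.tail :=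
      toWord_single_mul_cancel _ _ (by rw [hhead', hp2, flipb_cf])
    have := congrArg List.length hEw
    rw [w1, w2, FreeGroup.invRev_length] at this
    simp only [List.length_tail, List.length_cons, FreeGroup.toWord_inv,
      FreeGroup.invRev_length] at this
    omega
  · -- neither cancels
    have w1 : (FreeGroup.mk [(c, true)] * z).toWord = (c, true) :: z.toWord :=
      toWord_single_mul _ _ (head_cond_of_ne hhead _ (by rw [flipb_ct]; exact hp1))
    have w2 : (FreeGroup.mk [(c, false)] * z⁻¹).toWord = (c, false) :: z⁻¹.toWord :=
      toWord_single_mul _ _ (head_cond_of_ne hhead' _ (by rw [flipb_cf]; exact hp2))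
    rw [w1, w2, invRev_cons, hL', FreeGroup.invRev_invRev, flipb_cf] at hEw
    have hrep := eq_replicate_of_cons_eq_append hEw
    refine ⟨(z.toWord.length : ℤ), ?_⟩
    rw [← mk_replicate_true, ← hrep, FreeGroup.mk_toWord]

/-! ### no-center / cyclic lemmas -/

lemma zpow_of_toWord (c : α) (n : ℤ) :
    ∃ ε : Bool, ((FreeGroup.of c : FreeGroup α) ^ n).toWord = List.replicate n.natAbs (c, ε) := by
  cases n with
  | ofNat k =>
    refine ⟨true, ?_⟩
    rw [Int.ofNat_eq_coe, zpow_natCast, FreeGroup.toWord_of_pow]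
    rfl
  | negSucc k =>
    refine ⟨false, ?_⟩
    rw [zpow_negSucc, FreeGroup.toWord_inv, FreeGroup.toWord_of_pow, invRev_replicate, flipb_ct]
    rfl

lemma no_center {c d : α} (hcd : c ≠ d) {z : FreeGroup α}
    (h1 : Commute (FreeGroup.of c) z) (h2 : Commute (FreeGroup.of d) z) : z = 1 := by
  by_contra hz
  obtain ⟨m, rfl⟩ := commute_single h1
  obtain ⟨k, hk⟩ := commute_single h2
  have hm : m ≠ 0 := fun h0 => hz (by rw [h0, zpow_zero])
  have hk0 : k ≠ 0 := fun h0 => hz (by rw [hk, h0, zpow_zero])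
  obtain ⟨ε, he⟩ := zpow_of_toWord c m
  obtain ⟨ε', he'⟩ := zpow_of_toWord d k
  have := congrArg FreeGroup.toWord hk
  rw [he, he'] at this
  have hma : m.natAbs = (m.natAbs - 1) + 1 := by omega
  have hka : k.natAbs = (k.natAbs - 1) + 1 := by omega
  rw [hma, hka, List.replicate_succ, List.replicate_succ, List.cons_eq_cons] at this
  exact hcd (congrArg Prod.fst this.1)

lemma freegroup_isEmpty_eq_one {ι : Type*} [IsEmpty ι] (g : FreeGroup ι) : g = 1 := by
  classical
  cases h : g.toWord with
  | nil => exact FreeGroup.toWord_eq_nil_iff.mp h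
  | cons p T => exact (IsEmpty.false p.1).elim

lemma subsingleton_free_zpow {ι : Type*} [Subsingleton ι] (c : ι) (g : FreeGroup ι) :
    ∃ n : ℤ, g = FreeGroup.of c ^ n := by
  set φ : FreeGroup ι →* Multiplicative ℤ :=
    FreeGroup.lift (fun _ => Multiplicative.ofAdd (1 : ℤ)) with hφ
  set ψ : Multiplicative ℤ →* FreeGroup ι := zpowersHom _ (FreeGroup.of c) with hψ
  have hcomp : ψ.comp φ = MonoidHom.id (FreeGroup ι) := by
    apply FreeGroup.ext_hom
    intro i
    have : i = c := Subsingleton.elim _ _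
    subst this
    simp [hφ, hψ, zpowersHom_apply]
  refine ⟨Multiplicative.toAdd (φ g), ?_⟩
  have h5 : ψ (φ g) = g := by
    have := DFunLike.congr_fun hcomp g
    simpa using this
  exact h5.symm.trans (zpowersHom_apply (α := FreeGroup ι) (FreeGroup.of c) (φ g))

lemma of_noncomm {ι : Type*} {x y : ι}
    (h : FreeGroup.of x * FreeGroup.of y = FreeGroup.of y * FreeGroup.of x) : x = y := by
  classical
  by_contra hxy
  have hx : (FreeGroup.of x : FreeGroup ι) = FreeGroup.mk [(x, true)] := rfl
  have hy : (FreeGroup.of y : FreeGroup ι) = FreeGroup.mk [(y, true)] := rfl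
  have hwx : (FreeGroup.of y : FreeGroup ι).toWord = [(y, true)] := FreeGroup.toWord_of y
  have hwy : (FreeGroup.of x : FreeGroup ι).toWord = [(x, true)] := FreeGroup.toWord_of x
  have w1 : (FreeGroup.of x * FreeGroup.of y).toWord = (x, true) :: [(y, true)] := by
    rw [hx]
    refine toWord_single_mul _ _ ?_
    rw [hwx]
    intro q hq
    replace hq : (y, true) = q := by simpa using hq
    subst hq
    rw [flipb_ct]
    simp [Prod.ext_iff]
  have w2 : (FreeGroup.of y * FreeGroup.of x).toWord = (y, true) :: [(x, true)] := by
    rw [hy]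
    refine toWord_single_mul _ _ ?_
    rw [hwy]
    intro q hq
    replace hq : (x, true) = q := by simpa using hq
    subst hq
    rw [flipb_ct]
    simp [Prod.ext_iff]
  have := congrArg FreeGroup.toWord h
  rw [w1, w2, List.cons_eq_cons] at this
  exact hxy (congrArg Prod.fst this.1)

/-- If `u, v` generate a rank-2 free subgroup, the elements `u^(n+1) v u^-(n+1)` freely
generate a free subgroup of infinite rank. -/
lemma free_family_in {K : Type*} [Group K] {u v : K}
    (h : Function.Injective ⇑(FreeGroup.lift ![u, v] : FreeGroup (Fin 2) →* K)) :
    Function.Injective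
      ⇑(FreeGroup.lift (fun n : ℕ => u ^ (n+1) * v * (u ^ (n+1))⁻¹) : FreeGroup ℕ →* K) := by
  have key : (FreeGroup.lift (fun n : ℕ => u ^ (n+1) * v * (u ^ (n+1))⁻¹) : FreeGroup ℕ →* K)
      = (FreeGroup.lift ![u, v]).comp
        (FreeGroup.lift (fun n : ℕ => cElt (0 : Fin 2) 1 n true)) := by
    apply FreeGroup.ext_hom
    intro n
    simp only [FreeGroup.lift_apply_of, MonoidHom.comp_apply, cElt_eq]
    simp
  rw [key, MonoidHom.coe_comp]
  exact h.comp (free_family (by decide : (0 : Fin 2) ≠ 1))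

/-- The core lemma: a normal subgroup of the rank-2 free group satisfying a nontrivial law
is trivial. -/
theorem normal_no_law {r : ℕ} (w₀ : FreeGroup (Fin r)) (hw : w₀ ≠ 1)
    (M : Subgroup (FreeGroup (Fin 2))) (hMn : M.Normal)
    (hM : ∀ f : Fin r → FreeGroup (Fin 2), (∀ i, f i ∈ M) → FreeGroup.lift f w₀ = 1) :
    M = ⊥ := by
  rcases Subgroup.bot_or_exists_ne_one M with hbot | ⟨w, hwM, hwne⟩
  · exact hbot
  exfalso
  haveI : IsFreeGroup ↥M := inferInstance
  obtain ⟨ι, ⟨B⟩⟩ := IsFreeGroup.nonempty_basis (G := ↥M)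
  by_cases hcomm : ∀ u ∈ M, ∀ v ∈ M, u * v = v * u
  · -- commutative case: M is cyclic, normal, nontrivial: impossible
    haveI hSS : Subsingleton ι := by
      constructor
      intro a b
      apply of_noncomm (x := a) (y := b)
      have h1 := hcomm ↑(B a) (SetLike.coe_mem _) ↑(B b) (SetLike.coe_mem _)
      have h2 : (B a) * (B b) = (B b) * (B a) := Subtype.ext h1
      have := congrArg B.repr h2
      rwa [map_mul, map_mul, B.repr_apply_coe, B.repr_apply_coe] at this
    rcases isEmpty_or_nonempty ι with hι | ⟨⟨c₀⟩⟩
    · have : B.repr ⟨w, hwM⟩ = B.repr 1 := by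
        rw [freegroup_isEmpty_eq_one (B.repr ⟨w, hwM⟩), freegroup_isEmpty_eq_one (B.repr 1)]
      exact hwne (by simpa using Subtype.ext_iff.mp (B.repr.injective this))
    · set z' : ↥M := B.repr.symm (FreeGroup.of c₀) with hz'
      set z : FreeGroup (Fin 2) := ↑z' with hz
      have hzM : z ∈ M := SetLike.coe_mem z'
      have hzne : z ≠ 1 := by
        intro h1
        have h2 : z' = 1 := Subtype.ext (by rw [← hz, h1]; rfl)
        have h3 := congrArg B.repr h2
        rw [hz', MulEquiv.apply_symm_apply, map_one] at h3
        exact FreeGroup.of_ne_one c₀ h3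
      have hpow : ∀ g ∈ M, ∃ n : ℤ, g = z ^ n := by
        intro g hg
        obtain ⟨n, hn⟩ := subsingleton_free_zpow c₀ (B.repr ⟨g, hg⟩)
        refine ⟨n, ?_⟩
        have h4 := congrArg B.repr.symm hn
        rw [MulEquiv.symm_apply_apply, map_zpow] at h4
        have h6 := congrArg Subtype.val h4
        rw [hz, hz']
        simpa using h6
      have htf : ∀ n : ℤ, z ^ n = 1 → n = 0 := by
        intro n hn
        have h1 : z' ^ n = 1 := by
          apply Subtype.ext
          push_cast
          rw [← hz]
          exact hn
        have h2 := congrArg B.repr h1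
        rw [map_zpow, map_one, hz', MulEquiv.apply_symm_apply] at h2
        set φ : FreeGroup ι →* Multiplicative ℤ :=
          FreeGroup.lift (fun _ => Multiplicative.ofAdd (1 : ℤ)) with hφ
        have h3 := congrArg φ h2
        rw [map_zpow, map_one, hφ] at h3
        simp only [FreeGroup.lift_apply_of] at h3
        have h4 : Multiplicative.toAdd ((Multiplicative.ofAdd (1:ℤ)) ^ n) = (0 : ℤ) := by
          rw [h3]; rfl
        simpa using h4
      have hconj : ∀ c : Fin 2, Commute (FreeGroup.of c) z := by
        intro c
        set t : FreeGroup (Fin 2) := FreeGroup.of c with ht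
        obtain ⟨p, hp⟩ := hpow (t * z * t⁻¹) (hMn.conj_mem z hzM t)
        obtain ⟨q, hq⟩ := hpow (t⁻¹ * z * t) (by
          have := hMn.conj_mem z hzM t⁻¹
          simpa using this)
        have hc1 : (t⁻¹ * z * t) ^ p = t⁻¹ * z ^ p * t := by
          have h7 := map_zpow (MulAut.conj t⁻¹) z p
          simpa [MulAut.conj_apply, mul_assoc] using h7.symm
        have h5 : z = z ^ (q * p) := by
          calc z = t⁻¹ * (t * z * t⁻¹) * t := by group
          _ = t⁻¹ * z ^ p * t := by rw [hp]
          _ = (t⁻¹ * z * t) ^ p := hc1.symm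
          _ = (z ^ q) ^ p := by rw [hq]
          _ = z ^ (q * p) := by rw [← zpow_mul]
        have h6 : z ^ (q * p - 1) = 1 := by
          rw [zpow_sub, zpow_one, ← h5, mul_inv_cancel]
        have h7 : q * p = 1 := by
          have := htf _ h6
          omega
        have hpu : p = 1 ∨ p = -1 :=
          Int.isUnit_iff.mp (IsUnit.of_mul_eq_one q (by rw [Int.mul_comm]; exact h7))
        rcases hpu with h8 | h8
        · rw [h8, zpow_one] at hp
          show t * z = z * t
          calc t * z = t * z * t⁻¹ * t := by group
          _ = z * t := by rw [hp]
        · rw [h8, zpow_neg, zpow_one] at hp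
          exact absurd (no_conj_inv hp) hzne
      exact hzne (no_center (by decide : (0 : Fin 2) ≠ 1) (hconj 0) (hconj 1))
  · -- noncommutative case: M contains a rank-2 free subgroup, contradicting the law
    push_neg at hcomm
    obtain ⟨u₀, hu₀, v₀, hv₀, huv⟩ := hcomm
    have hS : ¬ Subsingleton ι := by
      intro hS
      apply huv
      have key : ∀ (g h : FreeGroup ι), g * h = h * g := by
        intro g h
        rcases isEmpty_or_nonempty ι with h1 | ⟨⟨c⟩⟩
        · rw [freegroup_isEmpty_eq_one g, freegroup_isEmpty_eq_one h]
        · obtain ⟨n, rfl⟩ := subsingleton_free_zpow c g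
          obtain ⟨m, rfl⟩ := subsingleton_free_zpow c h
          exact zpow_mul_comm _ n m
      have h1 := key (B.repr ⟨u₀, hu₀⟩) (B.repr ⟨v₀, hv₀⟩)
      have h2 : (⟨u₀, hu₀⟩ : ↥M) * ⟨v₀, hv₀⟩ = ⟨v₀, hv₀⟩ * ⟨u₀, hu₀⟩ := by
        apply B.repr.injective
        rw [map_mul, map_mul, h1]
      simpa using congrArg Subtype.val h2
    obtain ⟨x, y, hxy⟩ : ∃ x y : ι, x ≠ y := by
      by_contra hs
      push_neg at hs
      exact hS ⟨fun a b => hs a b⟩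
    classical
    set u : ↥M := B x with hu
    set v : ↥M := B y with hv
    have hinj2 : Function.Injective ⇑(FreeGroup.lift ![u, v] : FreeGroup (Fin 2) →* ↥M) := by
      have hkey : (FreeGroup.lift ![u, v] : FreeGroup (Fin 2) →* ↥M)
          = (B.repr.symm : FreeGroup ι ≃* ↥M).toMonoidHom.comp
              (FreeGroup.map ![x, y]) := by
        apply FreeGroup.ext_hom
        intro i
        rw [FreeGroup.lift_apply_of, MonoidHom.comp_apply, MulEquiv.coe_toMonoidHom,
          FreeGroup.map.of]
        fin_cases i <;> rfl
      rw [hkey, MonoidHom.coe_comp]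
      refine (MulEquiv.injective _).comp
        (map_injective_of_retraction ![x, y] (fun t => if t = x then 0 else 1) ?_)
      intro i
      fin_cases i
      · simp
      · simp [Ne.symm hxy]
    have hψ : Function.Injective
        ⇑(FreeGroup.lift (fun n : ℕ => u ^ (n+1) * v * (u ^ (n+1))⁻¹) : FreeGroup ℕ →* ↥M) :=
      free_family_in hinj2
    set χ : FreeGroup ℕ →* FreeGroup (Fin 2) :=
      M.subtype.comp (FreeGroup.lift (fun n : ℕ => u ^ (n+1) * v * (u ^ (n+1))⁻¹)) with hχ
    have hχinj : Function.Injective ⇑χ := by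
      rw [hχ, MonoidHom.coe_comp]
      exact (Subgroup.subtype_injective M).comp hψ
    have hr : 0 < r := by
      rcases Nat.eq_zero_or_pos r with h0 | h
      · exfalso
        apply hw
        subst h0
        exact freegroup_isEmpty_eq_one w₀
      · exact h
    set f : Fin r → FreeGroup (Fin 2) := fun i => χ (FreeGroup.of (i : ℕ)) with hf
    have hfM : ∀ i, f i ∈ M := fun i => SetLike.coe_mem _
    have hlaw := hM f hfM
    have hkey2 : (FreeGroup.lift f : FreeGroup (Fin r) →* FreeGroup (Fin 2))
        = χ.comp (FreeGroup.map (Fin.val : Fin r → ℕ)) := by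
      apply FreeGroup.ext_hom
      intro i
      rw [FreeGroup.lift_apply_of, MonoidHom.comp_apply, FreeGroup.map.of]
    rw [hkey2] at hlaw
    have h1 : FreeGroup.map (Fin.val : Fin r → ℕ) w₀ = 1 := by
      apply hχinj
      simpa using hlaw
    apply hw
    have hret := map_injective_of_retraction (Fin.val : Fin r → ℕ)
      (fun n => (⟨min n (r-1), by omega⟩ : Fin r)) (by
        intro i
        have := i.isLt
        apply Fin.ext
        simp
        omega)
    apply hret
    rw [h1, map_one]

end NoLawAux

namespace NoLawAux

lemma shortword_lift {G : Type*} [Group G] (N : Subgroup G) [N.Normal] (S : Finset G) (N' : ℕ)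
    (a : G ⧸ N) [DecidableEq (G ⧸ N)]
    (h : ShortWord (↑(S.image (QuotientGroup.mk' N)) : Set (G ⧸ N)) N' a) :
    ∃ a' : G, ShortWord (↑S : Set G) N' a' ∧ QuotientGroup.mk' N a' = a := by
  obtain ⟨l, hl, hlen, hprod⟩ := h
  subst hprod
  suffices hs : ∀ l : List (G ⧸ N), (∀ x ∈ l, x ∈ (↑(S.image (QuotientGroup.mk' N)) : Set (G ⧸ N))
      ∨ x⁻¹ ∈ (↑(S.image (QuotientGroup.mk' N)) : Set (G ⧸ N))) →
      ∃ l' : List G, (∀ y ∈ l', y ∈ (↑S : Set G) ∨ y⁻¹ ∈ (↑S : Set G)) ∧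
        l'.length = l.length ∧ QuotientGroup.mk' N l'.prod = l.prod by
    obtain ⟨l', hl', hlen', hprod'⟩ := hs l hl
    exact ⟨l'.prod, ⟨l', hl', by rw [hlen']; exact hlen, rfl⟩, hprod'⟩
  intro l
  induction l with
  | nil =>
    intro _
    exact ⟨[], by simp, by simp, by simp⟩
  | cons x xs ih =>
    intro hmem
    obtain ⟨l', hl', hlen', hprod'⟩ := ih (fun y hy => hmem y (List.mem_cons_of_mem _ hy))
    rcases hmem x (List.mem_cons_self) with hx | hx
    · rw [Finset.coe_image, Set.mem_image] at hx
      obtain ⟨s, hsS, hs⟩ := hx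
      refine ⟨s :: l', ?_, by simp [hlen'], ?_⟩
      · intro y hy
        rcases List.mem_cons.mp hy with rfl | hy
        · exact Or.inl hsS
        · exact hl' y hy
      · rw [List.prod_cons, List.prod_cons, map_mul, hprod', hs]
    · rw [Finset.coe_image, Set.mem_image] at hx
      obtain ⟨s, hsS, hs⟩ := hx
      refine ⟨s⁻¹ :: l', ?_, by simp [hlen'], ?_⟩
      · intro y hy
        rcases List.mem_cons.mp hy with rfl | hy
        · exact Or.inr (by simpa using hsS)
        · exact hl' y hy
      · rw [List.prod_cons, List.prod_cons, map_mul, hprod', map_inv, hs, inv_inv]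

end NoLawAux

/-- Let N ⊴ G satisfy a (nontrivial) law w_N.  If every subgroup of
G/N satisfies the law w' or contains an N'-short free subgroup with respect to
each finite generating set, then every subgroup of G satisfies the composite law
w_N ∘ w' or contains an N'-short free subgroup; moreover a rank-2 free subgroup
of G meets N trivially and injects into G/N. -/
theorem law_alternative_law_kernel {G : Type*} [Group G] (N : Subgroup G) [N.Normal]
    {r₁ r₂ : ℕ} (wN : FreeGroup (Fin r₁)) (w' : FreeGroup (Fin r₂)) (N' : ℕ)
    (hwN : wN ≠ 1)
    (hN : ∀ f : Fin r₁ → G, (∀ i, f i ∈ N) → FreeGroup.lift f wN = 1)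
    (hQ : ∀ S : Finset (G ⧸ N),
      (∀ f : Fin r₂ → G ⧸ N, (∀ i, f i ∈ Subgroup.closure (S : Set (G ⧸ N))) →
        FreeGroup.lift f w' = 1) ∨
      (∃ a b : G ⧸ N, ShortWord (S : Set (G ⧸ N)) N' a ∧
        ShortWord (S : Set (G ⧸ N)) N' b ∧
        Function.Injective ⇑(FreeGroup.lift ![a, b] : FreeGroup (Fin 2) →* G ⧸ N))) :
    (∀ S : Finset G,
      (∀ f : Fin r₁ × Fin r₂ → G, (∀ i, f i ∈ Subgroup.closure (S : Set G)) →
        FreeGroup.lift f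
          (FreeGroup.lift (fun i => FreeGroup.map (fun j => (i, j)) w') wN) = 1) ∨
      (∃ a b : G, ShortWord (S : Set G) N' a ∧ ShortWord (S : Set G) N' b ∧
        Function.Injective ⇑(FreeGroup.lift ![a, b] : FreeGroup (Fin 2) →* G))) ∧
    (∀ a b : G,
      Function.Injective ⇑(FreeGroup.lift ![a, b] : FreeGroup (Fin 2) →* G) →
      (∀ x ∈ Subgroup.closure {a, b} ⊓ N, x = (1 : G)) ∧
      Function.Injective
        ⇑((QuotientGroup.mk' N).comp (FreeGroup.lift ![a, b]))) := by
  classical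
  constructor
  · -- Part 1
    intro S
    set π : G →* G ⧸ N := QuotientGroup.mk' N with hπ
    rcases hQ (S.image π) with hlaw | ⟨a, b, hsa, hsb, hinj⟩
    · left
      intro f hf
      set gvec : Fin r₁ → G := fun i => FreeGroup.lift (fun j => f (i, j)) w' with hg
      have hgN : ∀ i, gvec i ∈ N := by
        intro i
        have e := DFunLike.congr_fun (NoLawAux.hom_comp_lift π (fun j => f (i, j))) w'
        rw [MonoidHom.comp_apply] at e
        have hval : FreeGroup.lift (fun j => π (f (i, j))) w' = 1 := by
          apply hlaw
          intro j
          have h1 : π (f (i, j)) ∈ (Subgroup.closure ((S : Set G))).map π :=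
            Subgroup.mem_map_of_mem π (hf (i, j))
          rw [MonoidHom.map_closure] at h1
          rwa [Finset.coe_image]
        have : π (gvec i) = 1 := by rw [hg]; rw [e]; exact hval
        rwa [hπ, QuotientGroup.mk'_apply, QuotientGroup.eq_one_iff] at this
      have hfin := hN gvec hgN
      have e1 : (FreeGroup.lift f).comp
          (FreeGroup.lift (fun i => FreeGroup.map (fun j => (i, j)) w'))
          = FreeGroup.lift gvec := by
        apply FreeGroup.ext_hom
        intro i
        rw [MonoidHom.comp_apply, FreeGroup.lift_apply_of, FreeGroup.lift_apply_of]
        have e2 : (FreeGroup.lift f).comp (FreeGroup.map (fun j => ((i, j) : Fin r₁ × Fin r₂)))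
            = FreeGroup.lift (fun j => f (i, j)) := by
          apply FreeGroup.ext_hom
          intro j
          rw [MonoidHom.comp_apply, FreeGroup.map.of, FreeGroup.lift_apply_of, FreeGroup.lift_apply_of]
        have := DFunLike.congr_fun e2 w'
        rw [MonoidHom.comp_apply] at this
        rw [this, hg]
      have := DFunLike.congr_fun e1 wN
      rw [MonoidHom.comp_apply] at this
      rw [this, hfin]
    · right
      obtain ⟨a', ha'S, ha'⟩ := NoLawAux.shortword_lift N S N' a hsa
      obtain ⟨b', hb'S, hb'⟩ := NoLawAux.shortword_lift N S N' b hsb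
      refine ⟨a', b', ha'S, hb'S, ?_⟩
      have hcomp3 : π.comp (FreeGroup.lift ![a', b']) = FreeGroup.lift ![a, b] := by
        apply FreeGroup.ext_hom
        intro i
        rw [MonoidHom.comp_apply, FreeGroup.lift_apply_of]
        fin_cases i
        · simpa [hπ] using ha'
        · simpa [hπ] using hb'
      have h4 : Function.Injective (⇑π ∘ ⇑(FreeGroup.lift ![a', b'])) := by
        rw [← MonoidHom.coe_comp, hcomp3]
        exact hinj
      exact Function.Injective.of_comp h4
  · -- Part 2
    intro a b hinj
    set φ : FreeGroup (Fin 2) →* G := FreeGroup.lift ![a, b] with hφ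
    set M : Subgroup (FreeGroup (Fin 2)) := N.comap φ with hM
    have hMn : M.Normal := Subgroup.Normal.comap ‹N.Normal› φ
    have hMlaw : ∀ f : Fin r₁ → FreeGroup (Fin 2), (∀ i, f i ∈ M) → FreeGroup.lift f wN = 1 := by
      intro f hf
      have e := DFunLike.congr_fun (NoLawAux.hom_comp_lift φ f) wN
      rw [MonoidHom.comp_apply] at e
      apply hinj
      show φ (FreeGroup.lift f wN) = φ 1
      rw [map_one, e]
      exact hN (fun i => φ (f i)) (fun i => hf i)
    have hMbot : M = ⊥ := NoLawAux.normal_no_law wN hwN M hMn hMlaw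
    constructor
    · intro x hx
      obtain ⟨hx1, hx2⟩ := hx
      have hcl : Subgroup.closure {a, b} ≤ φ.range := by
        rw [Subgroup.closure_le]
        rintro t ht
        rcases ht with rfl | rfl
        · exact ⟨FreeGroup.of 0, by simp [hφ]⟩
        · exact ⟨FreeGroup.of 1, by simp [hφ]⟩
      obtain ⟨g, rfl⟩ := hcl hx1
      have hgM : g ∈ M := hx2
      rw [hMbot, Subgroup.mem_bot] at hgM
      rw [hgM, map_one]
    · rw [← MonoidHom.ker_eq_bot_iff]
      rw [← MonoidHom.comap_ker, QuotientGroup.ker_mk', ← hM, hMbot]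
end

section
/- In a right-angled Artin group (more generally, in any group satisfying the largeness alternative), any two elements either commute or freely generate a nonabelian free group of rank 2; consequently, such groups lie in the class L^Free_1 with law w = [a,b]: every finitely generated subgroup either satisfies the commutator law (is abelian) or contains a 1-short free subgroup. -/
namespace LOS

abbrev SL2 := Matrix.SpecialLinearGroup (Fin 2) ℤ

def V : Type := {v : Fin 2 → ℤ // v ≠ 0}

instance : SMul SL2 V where
  smul A v := ⟨(A : Matrix (Fin 2) (Fin 2) ℤ).mulVec v.1, by
    intro h
    apply v.2
    have h2 : ((A⁻¹ : SL2) : Matrix (Fin 2) (Fin 2) ℤ).mulVec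
        ((A : Matrix (Fin 2) (Fin 2) ℤ).mulVec v.1) = v.1 := by
      rw [Matrix.mulVec_mulVec, ← Matrix.SpecialLinearGroup.coe_mul, inv_mul_cancel,
        Matrix.SpecialLinearGroup.coe_one, Matrix.one_mulVec]
    rw [h] at h2
    rw [← h2, Matrix.mulVec_zero]⟩

theorem smul_coe (A : SL2) (v : V) :
    (A • v).1 = (A : Matrix (Fin 2) (Fin 2) ℤ).mulVec v.1 := rfl

instance : MulAction SL2 V where
  one_smul v := by
    apply Subtype.ext
    rw [smul_coe, Matrix.SpecialLinearGroup.coe_one, Matrix.one_mulVec]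
  mul_smul A B v := by
    apply Subtype.ext
    rw [smul_coe, smul_coe, smul_coe, Matrix.mulVec_mulVec,
      Matrix.SpecialLinearGroup.coe_mul]

def Ma : SL2 := ⟨!![1,2;0,1], by simp [Matrix.det_fin_two_of]⟩
def Mb : SL2 := ⟨!![1,0;2,1], by simp [Matrix.det_fin_two_of]⟩

lemma Ma0 (v : V) : (Ma • v).1 0 = v.1 0 + 2 * v.1 1 := by
  rw [smul_coe]; simp [Ma, Matrix.mulVec, dotProduct, Fin.sum_univ_two]
lemma Ma1 (v : V) : (Ma • v).1 1 = v.1 1 := by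
  rw [smul_coe]; simp [Ma, Matrix.mulVec, dotProduct, Fin.sum_univ_two]
lemma Mainv0 (v : V) : (Ma⁻¹ • v).1 0 = v.1 0 - 2 * v.1 1 := by
  rw [smul_coe, Matrix.SpecialLinearGroup.coe_inv]
  simp [Ma, Matrix.mulVec, dotProduct, Fin.sum_univ_two,
    Matrix.SpecialLinearGroup.coe_inv, Matrix.adjugate_fin_two]
  ring
lemma Mainv1 (v : V) : (Ma⁻¹ • v).1 1 = v.1 1 := by
  rw [smul_coe, Matrix.SpecialLinearGroup.coe_inv]
  simp [Ma, Matrix.mulVec, dotProduct, Fin.sum_univ_two,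
    Matrix.SpecialLinearGroup.coe_inv, Matrix.adjugate_fin_two]
lemma Mb0 (v : V) : (Mb • v).1 0 = v.1 0 := by
  rw [smul_coe]; simp [Mb, Matrix.mulVec, dotProduct, Fin.sum_univ_two]
lemma Mb1 (v : V) : (Mb • v).1 1 = v.1 1 + 2 * v.1 0 := by
  rw [smul_coe]; simp [Mb, Matrix.mulVec, dotProduct, Fin.sum_univ_two]; ring
lemma Mbinv0 (v : V) : (Mb⁻¹ • v).1 0 = v.1 0 := by
  rw [smul_coe, Matrix.SpecialLinearGroup.coe_inv]
  simp [Mb, Matrix.mulVec, dotProduct, Fin.sum_univ_two,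
    Matrix.SpecialLinearGroup.coe_inv, Matrix.adjugate_fin_two]
lemma Mbinv1 (v : V) : (Mb⁻¹ • v).1 1 = v.1 1 - 2 * v.1 0 := by
  rw [smul_coe, Matrix.SpecialLinearGroup.coe_inv]
  simp [Mb, Matrix.mulVec, dotProduct, Fin.sum_univ_two,
    Matrix.SpecialLinearGroup.coe_inv, Matrix.adjugate_fin_two]
  ring

lemma vne (v : V) : ¬(v.1 0 = 0 ∧ v.1 1 = 0) := by
  rintro ⟨h0, h1⟩
  exact v.2 (funext fun i => by fin_cases i <;> assumption)

def X0 : Set V := {v | 0 ≤ v.1 0 * v.1 1 ∧ |v.1 1| < |v.1 0|}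
def X1 : Set V := {v | 0 ≤ v.1 0 * v.1 1 ∧ |v.1 0| ≤ |v.1 1|}
def Y0 : Set V := {v | v.1 0 * v.1 1 < 0 ∧ |v.1 1| ≤ |v.1 0|}
def Y1 : Set V := {v | v.1 0 * v.1 1 < 0 ∧ |v.1 0| < |v.1 1|}

lemma habs1 {x y : ℤ} (hne : ¬(x = 0 ∧ y = 0)) : 1 ≤ |x| + |y| := by
  rcases not_and_or.mp hne with h | h
  · have h1 := abs_pos.mpr h; have h2 := abs_nonneg y; linarith
  · have h1 := abs_pos.mpr h; have h2 := abs_nonneg x; linarith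

lemma la1 (x y : ℤ) (hne : ¬(x = 0 ∧ y = 0)) (h : ¬(x*y < 0 ∧ |y| ≤ |x|)) :
    0 ≤ (x+2*y)*y ∧ |y| < |x+2*y| := by
  have h0 := habs1 hne
  rcases not_and_or.mp h with h | h <;> push_neg at h <;>
  rcases abs_cases x with ⟨hx1, hx2⟩ | ⟨hx1, hx2⟩ <;>
  rcases abs_cases y with ⟨hy1, hy2⟩ | ⟨hy1, hy2⟩ <;>
  rcases abs_cases (x+2*y) with ⟨hz1, hz2⟩ | ⟨hz1, hz2⟩ <;>
  simp only [hx1, hy1, hz1] at h h0 ⊢ <;>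
  constructor <;> nlinarith [sq_nonneg x, sq_nonneg y]

lemma la2 (x y : ℤ) (hne : ¬(x = 0 ∧ y = 0)) (h : ¬(0 ≤ x*y ∧ |y| < |x|)) :
    (x-2*y)*y < 0 ∧ |y| ≤ |x-2*y| := by
  have h0 := habs1 hne
  rcases not_and_or.mp h with h | h <;> push_neg at h <;>
  rcases abs_cases x with ⟨hx1, hx2⟩ | ⟨hx1, hx2⟩ <;>
  rcases abs_cases y with ⟨hy1, hy2⟩ | ⟨hy1, hy2⟩ <;>
  rcases abs_cases (x-2*y) with ⟨hz1, hz2⟩ | ⟨hz1, hz2⟩ <;>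
  simp only [hx1, hy1, hz1] at h h0 ⊢ <;>
  constructor <;> nlinarith [sq_nonneg x, sq_nonneg y]

lemma lb1 (x y : ℤ) (h : ¬(x*y < 0 ∧ |x| < |y|)) :
    0 ≤ x*(y+2*x) ∧ |x| ≤ |y+2*x| := by
  rcases not_and_or.mp h with h | h <;> push_neg at h <;>
  rcases abs_cases x with ⟨hx1, hx2⟩ | ⟨hx1, hx2⟩ <;>
  rcases abs_cases y with ⟨hy1, hy2⟩ | ⟨hy1, hy2⟩ <;>
  rcases abs_cases (y+2*x) with ⟨hz1, hz2⟩ | ⟨hz1, hz2⟩ <;>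
  simp only [hx1, hy1, hz1] at h ⊢ <;>
  constructor <;> nlinarith [sq_nonneg x, sq_nonneg y]

lemma lb2 (x y : ℤ) (h : ¬(0 ≤ x*y ∧ |x| ≤ |y|)) :
    x*(y-2*x) < 0 ∧ |x| < |y-2*x| := by
  rcases not_and_or.mp h with h | h <;> push_neg at h <;>
  rcases abs_cases x with ⟨hx1, hx2⟩ | ⟨hx1, hx2⟩ <;>
  rcases abs_cases y with ⟨hy1, hy2⟩ | ⟨hy1, hy2⟩ <;>
  rcases abs_cases (y-2*x) with ⟨hz1, hz2⟩ | ⟨hz1, hz2⟩ <;>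
  simp only [hx1, hy1, hz1] at h ⊢ <;>
  constructor <;> nlinarith [sq_nonneg x, sq_nonneg y]

theorem free_sl2 :
    Function.Injective (FreeGroup.lift ![Ma, Mb] : FreeGroup (Fin 2) →* SL2) := by
  apply FreeGroup.injective_lift_of_ping_pong ![Ma, Mb] ![X0, X1] ![Y0, Y1]
  · intro i; fin_cases i
    · refine ⟨⟨![1, 0], fun h => by simpa using congrFun h 0⟩, ?_⟩
      show (0:ℤ) ≤ 1 * 0 ∧ |(0:ℤ)| < |(1:ℤ)|
      norm_num
    · refine ⟨⟨![0, 1], fun h => by simpa using congrFun h 1⟩, ?_⟩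
      show (0:ℤ) ≤ 0 * 1 ∧ |(0:ℤ)| ≤ |(1:ℤ)|
      norm_num
  · intro i j hij
    fin_cases i <;> fin_cases j <;>
    first
      | exact absurd rfl hij
      | (refine Set.disjoint_left.mpr ?_
         rintro v ⟨h1, h2⟩ ⟨h3, h4⟩
         linarith)
  · intro i j hij
    fin_cases i <;> fin_cases j <;>
    first
      | exact absurd rfl hij
      | (refine Set.disjoint_left.mpr ?_
         rintro v ⟨h1, h2⟩ ⟨h3, h4⟩
         linarith)
  · intro i j
    fin_cases i <;> fin_cases j <;>
    (refine Set.disjoint_left.mpr ?_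
     rintro v ⟨h1, h2⟩ ⟨h3, h4⟩
     linarith)
  · intro i
    fin_cases i
    · rintro w ⟨v, hv, rfl⟩
      show 0 ≤ (Ma • v).1 0 * (Ma • v).1 1 ∧ |(Ma • v).1 1| < |(Ma • v).1 0|
      rw [Ma0, Ma1]
      exact la1 _ _ (vne v) hv
    · rintro w ⟨v, hv, rfl⟩
      show 0 ≤ (Mb • v).1 0 * (Mb • v).1 1 ∧ |(Mb • v).1 0| ≤ |(Mb • v).1 1|
      rw [Mb0, Mb1]
      exact lb1 _ _ hv
  · intro i
    fin_cases i
    · rintro w ⟨v, hv, rfl⟩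
      show (Ma⁻¹ • v).1 0 * (Ma⁻¹ • v).1 1 < 0 ∧ |(Ma⁻¹ • v).1 1| ≤ |(Ma⁻¹ • v).1 0|
      rw [Mainv0, Mainv1]
      exact la2 _ _ (vne v) hv
    · rintro w ⟨v, hv, rfl⟩
      show (Mb⁻¹ • v).1 0 * (Mb⁻¹ • v).1 1 < 0 ∧ |(Mb⁻¹ • v).1 0| < |(Mb⁻¹ • v).1 1|
      rw [Mbinv0, Mbinv1]
      exact lb2 _ _ hv

theorem sl2_rf (M : SL2) (hM : M ≠ 1) :
    ∃ (Q : Type) (_ : Group Q) (_ : Finite Q) (q : SL2 →* Q), q M ≠ 1 := by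
  have hmat : (M : Matrix (Fin 2) (Fin 2) ℤ) ≠ 1 := by
    intro h
    exact hM (Subtype.ext (by rw [h, Matrix.SpecialLinearGroup.coe_one]))
  obtain ⟨i, j, hij⟩ : ∃ i j,
      (M : Matrix (Fin 2) (Fin 2) ℤ) i j ≠ (1 : Matrix (Fin 2) (Fin 2) ℤ) i j := by
    by_contra h
    push_neg at h
    exact hmat (Matrix.ext fun i j => h i j)
  set d : ℤ := (M : Matrix (Fin 2) (Fin 2) ℤ) i j - (1 : Matrix (Fin 2) (Fin 2) ℤ) i j
    with hd
  have hd0 : d ≠ 0 := sub_ne_zero.mpr hij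
  set m : ℕ := d.natAbs + 1 with hm
  refine ⟨Matrix.SpecialLinearGroup (Fin 2) (ZMod m), inferInstance, inferInstance,
    Matrix.SpecialLinearGroup.map (Int.castRingHom (ZMod m)), ?_⟩
  intro hq
  have h2 := congrArg
    (fun N : Matrix.SpecialLinearGroup (Fin 2) (ZMod m) =>
      (N : Matrix (Fin 2) (Fin 2) (ZMod m)) i j) hq
  simp only [Matrix.SpecialLinearGroup.map_apply_coe, RingHom.mapMatrix_apply,
    Matrix.SpecialLinearGroup.coe_one, Matrix.map_apply, Int.coe_castRingHom] at h2
  have h3 : ((d : ℤ) : ZMod m) = 0 := by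
    rw [hd]
    push_cast
    rw [sub_eq_zero, h2]
    by_cases hij2 : i = j <;> simp [Matrix.one_apply, hij2]
  rw [ZMod.intCast_zmod_eq_zero_iff_dvd] at h3
  have h4 : m ∣ d.natAbs := by
    rwa [← Int.natAbs_dvd_natAbs, Int.natAbs_natCast] at h3
  have h5 := Nat.le_of_dvd (Int.natAbs_pos.mpr hd0) h4
  omega

theorem F2_hopfian {φ : FreeGroup (Fin 2) →* FreeGroup (Fin 2)}
    (hφ : Function.Surjective φ) : Function.Injective φ := by
  rw [injective_iff_map_eq_one]
  intro w hw
  by_contra hw1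
  have hρw : (FreeGroup.lift ![Ma, Mb]) w ≠ 1 := by
    intro h
    exact hw1 (free_sl2 (by rw [h, map_one]))
  obtain ⟨Q, _, _, q, hq⟩ := sl2_rf _ hρw
  have hfin : Finite (FreeGroup (Fin 2) →* Q) := by
    have hi : Function.Injective
        (fun ψ : FreeGroup (Fin 2) →* Q => fun i => ψ (FreeGroup.of i)) := by
      intro ψ₁ ψ₂ h
      exact FreeGroup.ext_hom _ _ fun i => congrFun h i
    exact Finite.of_injective _ hi
  have hinj : Function.Injective (fun ψ : FreeGroup (Fin 2) →* Q => ψ.comp φ) := by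
    intro ψ₁ ψ₂ h
    refine MonoidHom.ext fun x => ?_
    obtain ⟨y, rfl⟩ := hφ x
    exact DFunLike.congr_fun h y
  obtain ⟨ψ, hψ⟩ := Finite.injective_iff_surjective.mp hinj
    (q.comp (FreeGroup.lift ![Ma, Mb]))
  have hc : q ((FreeGroup.lift ![Ma, Mb]) w) = ψ (φ w) :=
    (DFunLike.congr_fun hψ w).symm
  rw [hw, map_one] at hc
  exact hq hc

theorem pair_free {G : Type*} [Group G]
    (hlarge : ∀ S : Finset G,
      (∃ ψ : ↥(Subgroup.closure (S : Set G)) →* FreeGroup (Fin 2),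
        Function.Surjective ψ) ∨
      (∃ n : ℕ, Nonempty
        (↥(Subgroup.closure (S : Set G)) ≃* Multiplicative (Fin n → ℤ))))
    (a b : G) : Commute a b ∨
      Function.Injective ⇑(FreeGroup.lift ![a, b] : FreeGroup (Fin 2) →* G) := by
  classical
  rcases hlarge {a, b} with ⟨ψ, hψ⟩ | ⟨n, ⟨e⟩⟩
  · right
    set π : FreeGroup (Fin 2) →* G := FreeGroup.lift ![a, b] with hπ
    have hS : Set.range ![a, b] = ((({a, b} : Finset G) : Set G)) := by
      ext x
      simp [Fin.exists_fin_two]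
      tauto
    have hrange : π.range = Subgroup.closure ((({a, b} : Finset G) : Set G)) := by
      rw [hπ, FreeGroup.range_lift_eq_closure, hS]
    have hmem : ∀ w, π w ∈ Subgroup.closure ((({a, b} : Finset G) : Set G)) := fun w => by
      rw [← hrange]; exact ⟨w, rfl⟩
    set π' := π.codRestrict _ hmem with hπ'
    have hsurj : Function.Surjective ⇑π' := by
      rintro ⟨g, hg⟩
      rw [← hrange] at hg
      obtain ⟨w, hw⟩ := hg
      exact ⟨w, Subtype.ext hw⟩
    have hcomp : Function.Surjective ⇑(ψ.comp π') := by
      rw [MonoidHom.coe_comp]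
      exact Function.Surjective.comp hψ hsurj
    have hinj' := F2_hopfian hcomp
    rw [MonoidHom.coe_comp] at hinj'
    have hπinj : Function.Injective ⇑π' := Function.Injective.of_comp hinj'
    exact fun x y h => hπinj (Subtype.ext h)
  · left
    have ha : a ∈ Subgroup.closure ((({a, b} : Finset G) : Set G)) :=
      Subgroup.subset_closure (by simp)
    have hb : b ∈ Subgroup.closure ((({a, b} : Finset G) : Set G)) :=
      Subgroup.subset_closure (by simp)
    have key : (⟨a, ha⟩ : ↥(Subgroup.closure ((({a, b} : Finset G) : Set G)))) * ⟨b, hb⟩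
        = ⟨b, hb⟩ * ⟨a, ha⟩ :=
      e.injective (by rw [map_mul, map_mul, mul_comm])
    exact Subtype.ext_iff.mp key

end LOS

/-- In a group satisfying the largeness alternative (every finitely
generated subgroup surjects onto a nonabelian free group or is free abelian), any
two elements either commute or freely generate a rank-2 free group, and every
finitely generated subgroup is abelian or contains a 1-short free subgroup. -/
theorem largeness_one_short {G : Type*} [Group G]
    (hlarge : ∀ S : Finset G,
      (∃ ψ : ↥(Subgroup.closure (S : Set G)) →* FreeGroup (Fin 2),
        Function.Surjective ψ) ∨
      (∃ n : ℕ, Nonempty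
        (↥(Subgroup.closure (S : Set G)) ≃* Multiplicative (Fin n → ℤ)))) :
    (∀ a b : G, Commute a b ∨
      Function.Injective ⇑(FreeGroup.lift ![a, b] : FreeGroup (Fin 2) →* G)) ∧
    (∀ S : Finset G,
      (∀ x ∈ Subgroup.closure (S : Set G), ∀ y ∈ Subgroup.closure (S : Set G),
        Commute x y) ∨
      (∃ a b : G, ShortWord (S : Set G) 1 a ∧ ShortWord (S : Set G) 1 b ∧
        Function.Injective ⇑(FreeGroup.lift ![a, b] : FreeGroup (Fin 2) →* G))) := by
  refine ⟨LOS.pair_free hlarge, fun S => ?_⟩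
  by_cases hcomm : ∀ a ∈ S, ∀ b ∈ S, Commute a b
  · left
    intro x hx y hy
    exact Subgroup.closure_induction₂ (p := fun x y _ _ => Commute x y)
      (fun x y hx hy => hcomm x (Finset.mem_coe.mp hx) y (Finset.mem_coe.mp hy))
      (fun x _ => Commute.one_left x) (fun x _ => Commute.one_right x)
      (fun x y z _ _ _ h1 h2 => h1.mul_left h2)
      (fun y z x _ _ _ h1 h2 => h1.mul_right h2)
      (fun x y _ _ h => h.inv_left) (fun x y _ _ h => h.inv_right) hx hy
  · right
    push_neg at hcomm
    obtain ⟨a, ha, b, hb, hnc⟩ := hcomm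
    rcases LOS.pair_free hlarge a b with hc | hinj
    · exact absurd hc hnc
    · refine ⟨a, b, ⟨[a], ?_, by simp, by simp⟩, ⟨[b], ?_, by simp, by simp⟩, hinj⟩
      · intro x hx
        rw [List.mem_singleton] at hx
        subst hx
        exact Or.inl (Finset.mem_coe.mpr ha)
      · intro x hx
        rw [List.mem_singleton] at hx
        subst hx
        exact Or.inl (Finset.mem_coe.mpr hb)
end
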